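/- arXiv:1706.05796 — 9 statements merged into one kernel-verified Lean document; each statement's English description precedes it below -/
import Mathlib

section
/- There exists a constant C > 0, depending only on a, V_R and V_F, such that for every bounded measurable I : ℝ → ℝ, every function σ : [0,∞) → [0,∞), every w ∈ ℝ and every N̄ ∈ [0,∞), one has Z_{N̄,I}(w) ≤ C · exp( (‖I‖_∞ + |w|₋ σ(N̄))² / a ). -/
open MeasureTheory Real Set Filter

/-- The partition function `Z_{N̄,I}(w)` of the stationary LIF problem. -/
noncomputable def Zfun (a VR VF : ℝ) (I σ : ℝ → ℝ) (w N : ℝ) : ℝ :=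
  ∫ v in Set.Iic VF, ∫ v' in Set.Icc (max VR v) VF,
    Real.exp ((v' - v) * (v' + v - 2 * I w - 2 * w * σ N) / (2 * a))

private lemma sq_abs_add_le (x M : ℝ) : (|x| + M) ^ 2 ≤ 4 * x ^ 2 + (4 / 3) * M ^ 2 := by
  nlinarith [sq_nonneg (3 * |x| - M), sq_abs x]

/-- Upper bound on `Z_{N̄,I}(w)` (Lemma 3.2, estimate (3.10), upper part). -/
theorem stmt0 (a VR VF : ℝ) (ha : 0 < a) (hV : VR < VF) :
    ∃ C > 0, ∀ I : ℝ → ℝ, Measurable I →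
      ∀ nI : ℝ, (∀ x, |I x| ≤ nI) →
      ∀ σ : ℝ → ℝ, (∀ N, 0 ≤ N → 0 ≤ σ N) →
      ∀ w N : ℝ, 0 ≤ N →
        Zfun a VR VF I σ w N ≤ C * Real.exp ((nI + max (-w) 0 * σ N) ^ 2 / a) := by
  have hVV : 0 < VF - VR := sub_pos.mpr hV
  have h2a : (0:ℝ) < 2 * a := by linarith
  set S := Real.sqrt (π / (1 / (2 * a))) with hSdef
  have hS0 : 0 ≤ S := Real.sqrt_nonneg _
  set s := Real.sqrt a with hsdef
  have hs0 : 0 < s := Real.sqrt_pos.mpr ha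
  have hsa : s ^ 2 = a := Real.sq_sqrt ha.le
  set c2 := VF - VR + |VF| + S with hc2def
  have hc20 : 0 < c2 := by
    have := abs_nonneg VF; simp only [hc2def]; linarith
  clear_value S s c2
  refine ⟨(VF - VR) * (c2 + s) * Real.exp (2 * VF ^ 2 / a),
    mul_pos (mul_pos hVV (by linarith)) (Real.exp_pos _), ?_⟩
  intro I hI nI hnI σ hσ w N hN
  set M := nI + max (-w) 0 * σ N with hMdef
  have hnI0 : 0 ≤ nI := le_trans (abs_nonneg _) (hnI 0)
  have hσ0 : 0 ≤ σ N := hσ N hN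
  have hM0 : 0 ≤ M := by
    have : 0 ≤ max (-w) 0 * σ N := mul_nonneg (le_max_right _ _) hσ0
    simp only [hMdef]; linarith
  set B := |VF| + M with hBdef
  have hB0 : 0 ≤ B := by have := abs_nonneg VF; simp only [hBdef]; linarith
  have hμlb : -M ≤ I w + w * σ N := by
    have h1 : -nI ≤ I w := (abs_le.mp (hnI w)).1
    have h2 : -(max (-w) 0 * σ N) ≤ w * σ N := by
      have := mul_le_mul_of_nonneg_right (le_max_left (-w) 0) hσ0
      linarith
    simp only [hMdef]; linarith
  set K := Real.exp (B ^ 2 / (2 * a)) with hKdef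
  have hK0 : 0 < K := Real.exp_pos _
  set φ : ℝ → ℝ := fun v => Real.exp (-(max (VR - v - B) 0) ^ 2 / (2 * a)) with hφdef
  clear_value M B K φ
  have hφ_pos : ∀ v, 0 < φ v := fun v => by rw [hφdef]; exact Real.exp_pos _
  have hφ_le1 : ∀ v, φ v ≤ 1 := by
    intro v
    simp only [hφdef]
    apply Real.exp_le_one_iff.mpr
    apply div_nonpos_of_nonpos_of_nonneg _ h2a.le
    simpa using sq_nonneg (max (VR - v - B) 0)
  -- pointwise bound
  have key : ∀ v v', v ≤ v' → VR ≤ v' → v' ≤ VF →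
      Real.exp ((v' - v) * (v' + v - 2 * I w - 2 * w * σ N) / (2 * a)) ≤ K * φ v := by
    intro v v' h1 h2 h3
    have hm2 : (max (VR - v - B) 0) ^ 2 ≤ (v' - v - B) ^ 2 := by
      rcases le_or_gt (VR - v - B) 0 with h | h
      · rw [max_eq_right h]; simpa using sq_nonneg (v' - v - B)
      · rw [max_eq_left h.le]
        nlinarith
    have hvμ : v' - (I w + w * σ N) ≤ B := by
      have hv' : v' ≤ |VF| := le_trans h3 (le_abs_self VF)
      simp only [hBdef]; linarith
    have hE : (v' - v) * (v' + v - 2 * I w - 2 * w * σ N)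
        ≤ B ^ 2 + -(max (VR - v - B) 0) ^ 2 := by
      nlinarith [mul_nonneg (sub_nonneg.mpr h1) (sub_nonneg.mpr hvμ)]
    simp only [hKdef, hφdef]
    rw [← Real.exp_add]
    apply Real.exp_le_exp.mpr
    rw [← add_div]
    exact (div_le_div_iff_of_pos_right h2a).mpr hE
  -- inner integral bound
  have inner : ∀ v, v ≤ VF →
      (∫ v' in Icc (max VR v) VF,
        Real.exp ((v' - v) * (v' + v - 2 * I w - 2 * w * σ N) / (2 * a)))
      ≤ (VF - VR) * K * φ v := by
    intro v hv
    have hmax : max VR v ≤ VF := max_le hV.le hv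
    have hcont : Continuous fun v' =>
        Real.exp ((v' - v) * (v' + v - 2 * I w - 2 * w * σ N) / (2 * a)) := by fun_prop
    have hint : IntegrableOn (fun v' =>
        Real.exp ((v' - v) * (v' + v - 2 * I w - 2 * w * σ N) / (2 * a)))
        (Icc (max VR v) VF) := hcont.integrableOn_Icc
    calc (∫ v' in Icc (max VR v) VF,
            Real.exp ((v' - v) * (v' + v - 2 * I w - 2 * w * σ N) / (2 * a)))
        ≤ ∫ _ in Icc (max VR v) VF, K * φ v := by
          apply setIntegral_mono_on hint
            (integrableOn_const measure_Icc_lt_top.ne) measurableSet_Icc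
          intro x hx
          exact key v x (le_trans (le_max_right _ _) hx.1)
            (le_trans (le_max_left _ _) hx.1) hx.2
      _ = (VF - max VR v) * (K * φ v) := by
          rw [setIntegral_const, Real.volume_real_Icc_of_le hmax,
            smul_eq_mul]
      _ ≤ (VF - VR) * K * φ v := by
          have : VF - max VR v ≤ VF - VR := by
            have := le_max_left VR v; linarith
          have hKφ : 0 ≤ K * φ v := le_of_lt (mul_pos hK0 (hφ_pos v))
          nlinarith
  -- integrability of φ on Iic VF
  have hgauss : Integrable (fun v => Real.exp (-(1 / (2 * a)) * (v - (VR - B)) ^ 2)) :=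
    (integrable_exp_neg_mul_sq (by positivity)).comp_sub_right (VR - B)
  have hEq : EqOn (fun v => Real.exp (-(1 / (2 * a)) * (v - (VR - B)) ^ 2)) φ (Iic (VR - B)) := by
    intro x hx
    simp only [mem_Iic] at hx
    simp only [hφdef]
    rw [max_eq_left (by linarith)]
    congr 1
    have h : (VR - x - B) ^ 2 = (x - (VR - B)) ^ 2 := by ring
    rw [h]
    ring
  have hφc : Continuous φ := by
    rw [hφdef]
    fun_prop
  have h1int : IntegrableOn φ (Iic (VR - B)) :=
    (hgauss.integrableOn).congr_fun hEq measurableSet_Iic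
  have h2int : IntegrableOn φ (Ioc (VR - B) VF) :=
    (hφc.integrableOn_Icc (a := VR - B) (b := VF)).mono_set Ioc_subset_Icc_self
  have hle : VR - B ≤ VF := by linarith
  have hφint : IntegrableOn φ (Iic VF) := by
    have := h1int.union h2int
    rwa [Iic_union_Ioc_eq_Iic hle] at this
  -- outer bound
  have outer : Zfun a VR VF I σ w N ≤ ∫ v in Iic VF, (VF - VR) * K * φ v := by
    rw [Zfun]
    apply integral_mono_of_nonneg
    · exact Eventually.of_forall fun v => integral_nonneg fun v' => (Real.exp_pos _).le
    · exact hφint.const_mul ((VF - VR) * K)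
    · exact (ae_restrict_iff' measurableSet_Iic).mpr
        (Eventually.of_forall fun v hv => inner v hv)
  -- compute/bound the φ integral
  have hφsum : ∫ v in Iic VF, φ v ≤ (VF - (VR - B)) + S := by
    rw [← Iic_union_Ioc_eq_Iic hle,
      setIntegral_union (Iic_disjoint_Ioc le_rfl) measurableSet_Ioc h1int h2int]
    have e1 : ∫ v in Iic (VR - B), φ v ≤ S := by
      rw [← setIntegral_congr_fun measurableSet_Iic hEq]
      calc (∫ v in Iic (VR - B), Real.exp (-(1 / (2 * a)) * (v - (VR - B)) ^ 2))
          ≤ ∫ v, Real.exp (-(1 / (2 * a)) * (v - (VR - B)) ^ 2) :=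
            setIntegral_le_integral hgauss
              (Eventually.of_forall fun x => (Real.exp_pos _).le)
        _ = S := by
            rw [integral_sub_right_eq_self (fun x => Real.exp (-(1 / (2 * a)) * x ^ 2)) (VR - B)]
            rw [integral_gaussian, hSdef]
    have e2 : ∫ v in Ioc (VR - B) VF, φ v ≤ VF - (VR - B) := by
      calc (∫ v in Ioc (VR - B) VF, φ v)
          ≤ ∫ _ in Ioc (VR - B) VF, (1:ℝ) :=
            setIntegral_mono_on h2int
              (integrableOn_const measure_Ioc_lt_top.ne) measurableSet_Ioc
              (fun x _ => hφ_le1 x)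
        _ = VF - (VR - B) := by
            rw [setIntegral_const, Real.volume_real_Ioc_of_le hle,
              smul_eq_mul, mul_one]
    linarith
  have houter2 : Zfun a VR VF I σ w N ≤ (VF - VR) * K * ((VF - (VR - B)) + S) := by
    calc Zfun a VR VF I σ w N ≤ ∫ v in Iic VF, (VF - VR) * K * φ v := outer
      _ = (VF - VR) * K * ∫ v in Iic VF, φ v := integral_const_mul _ _
      _ ≤ (VF - VR) * K * ((VF - (VR - B)) + S) := by
          apply mul_le_mul_of_nonneg_left hφsum
          exact mul_nonneg hVV.le hK0.le
  -- final arithmetic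
  clear key inner outer hφsum hgauss hEq hφc h1int h2int hφint hφ_pos hφ_le1 hφdef φ
    hI hnI hσ hμlb hnI0 hσ0 hN hle
  have hMs : M ≤ s * (M ^ 2 / (4 * a) + 1) := by
    have hdiff : s * (M ^ 2 / (4 * a) + 1) - M = (M - 2 * s) ^ 2 / (4 * s) := by
      rw [← hsa]; field_simp; ring
    have hnn : (0:ℝ) ≤ (M - 2 * s) ^ 2 / (4 * s) :=
      div_nonneg (sq_nonneg _) (by linarith)
    linarith
  have hexp1 : (0:ℝ) ≤ M ^ 2 / (4 * a) := by positivity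
  have hone : (1:ℝ) ≤ Real.exp (M ^ 2 / (4 * a)) := Real.one_le_exp hexp1
  have hc2M : c2 + M ≤ (c2 + s) * Real.exp (M ^ 2 / (4 * a)) := by
    have h1 : c2 ≤ c2 * Real.exp (M ^ 2 / (4 * a)) := le_mul_of_one_le_right hc20.le hone
    have h2 : M ≤ s * Real.exp (M ^ 2 / (4 * a)) := by
      calc M ≤ s * (M ^ 2 / (4 * a) + 1) := hMs
        _ ≤ s * Real.exp (M ^ 2 / (4 * a)) := by
            apply mul_le_mul_of_nonneg_left _ hs0.le
            have := Real.add_one_le_exp (M ^ 2 / (4 * a))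
            linarith
    calc c2 + M ≤ c2 * Real.exp (M ^ 2 / (4 * a)) + s * Real.exp (M ^ 2 / (4 * a)) := by linarith
      _ = (c2 + s) * Real.exp (M ^ 2 / (4 * a)) := by ring
  have hKle : K ≤ Real.exp (2 * VF ^ 2 / a + (2 / 3) * (M ^ 2 / a)) := by
    rw [hKdef]
    apply Real.exp_le_exp.mpr
    have hnum : B ^ 2 ≤ 4 * VF ^ 2 + (4 / 3) * M ^ 2 := hBdef ▸ sq_abs_add_le VF M
    calc B ^ 2 / (2 * a) ≤ (4 * VF ^ 2 + (4 / 3) * M ^ 2) / (2 * a) :=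
        (div_le_div_iff_of_pos_right h2a).mpr hnum
      _ = 2 * VF ^ 2 / a + (2 / 3) * (M ^ 2 / a) := by ring
  have hcomb : (VF - (VR - B)) + S = c2 + M := by
    simp only [hc2def, hBdef]; ring
  have hfinal : (VF - VR) * K * ((VF - (VR - B)) + S)
      ≤ (VF - VR) * (c2 + s) * Real.exp (2 * VF ^ 2 / a) * Real.exp (M ^ 2 / a) := by
    rw [hcomb]
    have step1 : (c2 + M) * K
        ≤ ((c2 + s) * Real.exp (M ^ 2 / (4 * a)))
            * Real.exp (2 * VF ^ 2 / a + (2 / 3) * (M ^ 2 / a)) := by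
      apply mul_le_mul hc2M hKle hK0.le
      exact mul_nonneg (by linarith) (Real.exp_nonneg _)
    have step2 : ((c2 + s) * Real.exp (M ^ 2 / (4 * a)))
          * Real.exp (2 * VF ^ 2 / a + (2 / 3) * (M ^ 2 / a))
        = (c2 + s) * Real.exp (M ^ 2 / (4 * a) + (2 * VF ^ 2 / a + (2 / 3) * (M ^ 2 / a))) := by
      rw [mul_assoc, ← Real.exp_add]
    have step3 : Real.exp (M ^ 2 / (4 * a) + (2 * VF ^ 2 / a + (2 / 3) * (M ^ 2 / a)))
        ≤ Real.exp (2 * VF ^ 2 / a + M ^ 2 / a) := by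
      apply Real.exp_le_exp.mpr
      have : (0:ℝ) ≤ M ^ 2 / a := by positivity
      have heq : M ^ 2 / (4 * a) = (1 / 4) * (M ^ 2 / a) := by ring
      linarith [heq ▸ le_refl (M ^ 2 / (4 * a))]
    calc (VF - VR) * K * (c2 + M) = (VF - VR) * ((c2 + M) * K) := by ring
      _ ≤ (VF - VR) * (((c2 + s) * Real.exp (M ^ 2 / (4 * a)))
            * Real.exp (2 * VF ^ 2 / a + (2 / 3) * (M ^ 2 / a))) :=
          mul_le_mul_of_nonneg_left step1 hVV.le
      _ = (VF - VR) * ((c2 + s) * Real.exp (M ^ 2 / (4 * a) + (2 * VF ^ 2 / a + (2 / 3) * (M ^ 2 / a)))) := by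
          rw [step2]
      _ ≤ (VF - VR) * ((c2 + s) * Real.exp (2 * VF ^ 2 / a + M ^ 2 / a)) := by
          apply mul_le_mul_of_nonneg_left _ hVV.le
          apply mul_le_mul_of_nonneg_left step3 (by linarith)
      _ = (VF - VR) * (c2 + s) * Real.exp (2 * VF ^ 2 / a) * Real.exp (M ^ 2 / a) := by
          rw [Real.exp_add]; ring
  calc Zfun a VR VF I σ w N ≤ (VF - VR) * K * ((VF - (VR - B)) + S) := houter2
    _ ≤ (VF - VR) * (c2 + s) * Real.exp (2 * VF ^ 2 / a) * Real.exp (M ^ 2 / a) := hfinal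
end

section
/- There exists a constant C > 0, depending only on a, V_R and V_F, such that for every bounded measurable I : ℝ → ℝ, every function σ : [0,∞) → [0,∞), every w ∈ ℝ and every N̄ ∈ [0,∞), one has Z_{N̄,I}(w) ≥ C · min( 1 / (‖I‖_∞ + |w|₊ σ(N̄)) , V_F − V_R )². -/
open MeasureTheory Real Set Filter

set_option maxHeartbeats 1000000

noncomputable def phiA (a c v' : ℝ) : ℝ := Real.exp ((v' - c / 2) ^ 2 / (2 * a))

noncomputable def psiA (a c v : ℝ) : ℝ := Real.exp (-(v - c / 2) ^ 2 / (2 * a))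

noncomputable def GA (a VR VF c v : ℝ) : ℝ := ∫ v' in Set.Icc (max VR v) VF, phiA a c v'

lemma phiA_cont (a c : ℝ) : Continuous (phiA a c) := by unfold phiA; fun_prop

lemma psiA_cont (a c : ℝ) : Continuous (psiA a c) := by unfold psiA; fun_prop

lemma phiA_nonneg (a c v' : ℝ) : 0 ≤ phiA a c v' := (Real.exp_pos _).le

lemma psiA_nonneg (a c v : ℝ) : 0 ≤ psiA a c v := (Real.exp_pos _).le

lemma GA_nonneg (a VR VF c v : ℝ) : 0 ≤ GA a VR VF c v :=
  setIntegral_nonneg measurableSet_Icc fun x _ => phiA_nonneg a c x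

lemma GA_anti (a VR VF c : ℝ) : Antitone (GA a VR VF c) := by
  intro v1 v2 h12
  exact setIntegral_mono_set ((phiA_cont a c).integrableOn_Icc)
    (Eventually.of_forall (phiA_nonneg a c))
    (HasSubset.Subset.eventuallyLE (Icc_subset_Icc (max_le_max le_rfl h12) le_rfl))

lemma GA_meas (a VR VF c : ℝ) : Measurable (GA a VR VF c) :=
  (GA_anti a VR VF c).measurable

lemma exp_factor (a c : ℝ) (ha : a ≠ 0) (v v' : ℝ) :
    Real.exp ((v' - v) * (v' + v - c) / (2 * a)) = psiA a c v * phiA a c v' := by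
  rw [psiA, phiA, ← Real.exp_add]
  congr 1
  field_simp
  ring

lemma GA_bound (a VR VF c : ℝ) (ha : 0 < a) (hV : VR ≤ VF) (v : ℝ) :
    GA a VR VF c v ≤ (VF - VR) *
      Real.exp (((VR - c / 2) ^ 2 + (VF - c / 2) ^ 2) / (2 * a)) := by
  have h2a : (0:ℝ) < 2 * a := by linarith
  have hsub : Icc (max VR v) VF ⊆ Icc VR VF := Icc_subset_Icc (le_max_left _ _) le_rfl
  calc GA a VR VF c v ≤ ∫ v' in Icc VR VF, phiA a c v' :=
        setIntegral_mono_set ((phiA_cont a c).integrableOn_Icc)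
          (Eventually.of_forall (phiA_nonneg a c)) (HasSubset.Subset.eventuallyLE hsub)
    _ ≤ ∫ _v' in Icc VR VF,
          Real.exp (((VR - c / 2) ^ 2 + (VF - c / 2) ^ 2) / (2 * a)) := by
        refine setIntegral_mono_on ((phiA_cont a c).integrableOn_Icc)
          (integrableOn_const (by rw [Real.volume_Icc]; exact ENNReal.ofReal_ne_top))
          measurableSet_Icc ?_
        rintro x ⟨hx1, hx2⟩
        rw [phiA]
        apply Real.exp_le_exp.2
        apply div_le_div_of_nonneg_right ?_ h2a.le
        rcases le_or_gt x (c / 2) with h | h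
        · nlinarith [sq_nonneg (VF - c / 2),
            mul_nonneg (sub_nonneg.2 hx1) (by linarith : (0:ℝ) ≤ (c / 2 - x) + (c / 2 - VR))]
        · nlinarith [sq_nonneg (VR - c / 2),
            mul_nonneg (sub_nonneg.2 hx2) (by linarith : (0:ℝ) ≤ (VF - c / 2) + (x - c / 2))]
    _ = (volume (Icc VR VF)).toReal *
          Real.exp (((VR - c / 2) ^ 2 + (VF - c / 2) ^ 2) / (2 * a)) := by
        rw [setIntegral_const, smul_eq_mul, measureReal_def]
    _ = (VF - VR) * Real.exp (((VR - c / 2) ^ 2 + (VF - c / 2) ^ 2) / (2 * a)) := by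
        rw [Real.volume_Icc, ENNReal.toReal_ofReal (by linarith)]

lemma psiA_integrable (a c : ℝ) (ha : 0 < a) : Integrable (psiA a c) := by
  have h1 : Integrable (fun x : ℝ => Real.exp (-(1 / (2 * a)) * x ^ 2)) :=
    integrable_exp_neg_mul_sq (by positivity)
  have h2 : Integrable (fun x : ℝ => Real.exp (-(1 / (2 * a)) * (x - c / 2) ^ 2)) :=
    h1.comp_sub_right (c / 2)
  have heq : (fun x : ℝ => Real.exp (-(1 / (2 * a)) * (x - c / 2) ^ 2)) = psiA a c := by
    funext x
    rw [psiA]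
    congr 1
    ring
  rw [← heq]
  exact h2

lemma g_integrableOn (a VR VF c : ℝ) (ha : 0 < a) (hV : VR ≤ VF) :
    IntegrableOn (fun v => psiA a c v * GA a VR VF c v) (Iic VF) := by
  set B : ℝ := (VF - VR) * Real.exp (((VR - c / 2) ^ 2 + (VF - c / 2) ^ 2) / (2 * a)) with hB
  have hB0 : 0 ≤ B := mul_nonneg (by linarith) (Real.exp_pos _).le
  have hdom : Integrable (fun v => B * psiA a c v) :=
    (psiA_integrable a c ha).const_mul B
  refine Integrable.mono' hdom.integrableOn
    (((psiA_cont a c).measurable.mul (GA_meas a VR VF c)).aestronglyMeasurable) ?_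
  refine Eventually.of_forall fun v => ?_
  rw [Real.norm_eq_abs, abs_of_nonneg (mul_nonneg (psiA_nonneg a c v) (GA_nonneg a VR VF c v))]
  calc psiA a c v * GA a VR VF c v ≤ psiA a c v * B :=
        mul_le_mul_of_nonneg_left (GA_bound a VR VF c ha hV v) (psiA_nonneg a c v)
    _ = B * psiA a c v := by ring

lemma mainA (a VR VF c K δ : ℝ) (ha : 0 < a) (hV : VR < VF) (hδ0 : 0 < δ)
    (hδd : δ ≤ (VF - VR) / 2)
    (hexp : ∀ v ∈ Icc (VF - δ) VF, ∀ v' ∈ Icc v VF,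
      -K ≤ (v' - v) * (v' + v - c) / (2 * a)) :
    Real.exp (-K) * (δ ^ 2 / 2) ≤
      ∫ v in Iic VF, ∫ v' in Icc (max VR v) VF,
        Real.exp ((v' - v) * (v' + v - c) / (2 * a)) := by
  have hg : ∀ v, (∫ v' in Icc (max VR v) VF,
      Real.exp ((v' - v) * (v' + v - c) / (2 * a))) = psiA a c v * GA a VR VF c v := by
    intro v
    rw [GA]
    simp only [exp_factor a c ha.ne' v]
    exact integral_const_mul _ _
  have hZrw : (∫ v in Iic VF, ∫ v' in Icc (max VR v) VF,
        Real.exp ((v' - v) * (v' + v - c) / (2 * a)))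
      = ∫ v in Iic VF, psiA a c v * GA a VR VF c v :=
    setIntegral_congr_fun measurableSet_Iic fun v _ => hg v
  have hsub2 : Icc (VF - δ) VF ⊆ Iic VF := fun x hx => hx.2
  have hgint := g_integrableOn a VR VF c ha hV.le
  have step1 : ∫ v in Icc (VF - δ) VF, psiA a c v * GA a VR VF c v
      ≤ ∫ v in Iic VF, psiA a c v * GA a VR VF c v :=
    setIntegral_mono_set hgint
      (Eventually.of_forall fun v => mul_nonneg (psiA_nonneg a c v) (GA_nonneg a VR VF c v))
      (HasSubset.Subset.eventuallyLE hsub2)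
  have step2 : ∀ v ∈ Icc (VF - δ) VF,
      Real.exp (-K) * (VF - v) ≤ psiA a c v * GA a VR VF c v := by
    rintro v ⟨hv1, hv2⟩
    have hvVR : VR ≤ v := by
      have h1 : VR ≤ VF - δ := by linarith
      linarith
    have hmax : max VR v = v := max_eq_right hvVR
    rw [← hg v, hmax]
    calc Real.exp (-K) * (VF - v) = ∫ _v' in Icc v VF, Real.exp (-K) := by
          rw [setIntegral_const, measureReal_def, Real.volume_Icc,
            ENNReal.toReal_ofReal (by linarith), smul_eq_mul, mul_comm]
      _ ≤ ∫ v' in Icc v VF, Real.exp ((v' - v) * (v' + v - c) / (2 * a)) := by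
          refine setIntegral_mono_on
            (integrableOn_const (by rw [Real.volume_Icc]; exact ENNReal.ofReal_ne_top))
            (Continuous.integrableOn_Icc (by fun_prop))
            measurableSet_Icc ?_
          intro x hx
          exact Real.exp_le_exp.2 (hexp v ⟨hv1, hv2⟩ x hx)
  have step2' : ∫ v in Icc (VF - δ) VF, Real.exp (-K) * (VF - v)
      ≤ ∫ v in Icc (VF - δ) VF, psiA a c v * GA a VR VF c v :=
    setIntegral_mono_on (Continuous.integrableOn_Icc (by fun_prop))
      (hgint.mono_set hsub2) measurableSet_Icc step2
  have step3 : ∫ v in Icc (VF - δ) VF, Real.exp (-K) * (VF - v)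
      = Real.exp (-K) * (δ ^ 2 / 2) := by
    rw [integral_Icc_eq_integral_Ioc,
      ← intervalIntegral.integral_of_le (by linarith : VF - δ ≤ VF),
      intervalIntegral.integral_const_mul]
    have hid : ∫ x in (VF - δ)..VF, (VF - x) = δ ^ 2 / 2 := by
      rw [intervalIntegral.integral_sub intervalIntegrable_const intervalIntegral.intervalIntegrable_id,
        intervalIntegral.integral_const, integral_id]
      simp only [smul_eq_mul]
      ring
    rw [hid]
  rw [hZrw]
  calc Real.exp (-K) * (δ ^ 2 / 2)
      = ∫ v in Icc (VF - δ) VF, Real.exp (-K) * (VF - v) := step3.symm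
    _ ≤ ∫ v in Icc (VF - δ) VF, psiA a c v * GA a VR VF c v := step2'
    _ ≤ ∫ v in Iic VF, psiA a c v * GA a VR VF c v := step1

/-- Lower bound on `Z_{N̄,I}(w)` (Lemma 3.2, estimate (3.10), lower part). -/
theorem stmt1 (a VR VF : ℝ) (ha : 0 < a) (hV : VR < VF) :
    ∃ C > 0, ∀ I : ℝ → ℝ, Measurable I →
      ∀ nI : ℝ, (∀ x, |I x| ≤ nI) →
      ∀ σ : ℝ → ℝ, (∀ N, 0 ≤ N → 0 ≤ σ N) →
      ∀ w N : ℝ, 0 ≤ N →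
        C * (min (1 / (nI + max w 0 * σ N)) (VF - VR)) ^ 2 ≤ Zfun a VR VF I σ w N := by
  have hd0 : 0 < VF - VR := sub_pos.2 hV
  set K : ℝ := ((VF - VR) ^ 2 / 2 + 1 + (VF - VR) * |VF|) / (2 * a) with hK
  refine ⟨Real.exp (-K) / 8, by positivity, ?_⟩
  intro I hI nI hnI σ hσ w N hN
  have hσN : 0 ≤ σ N := hσ N hN
  have hnI0 : 0 ≤ nI := le_trans (abs_nonneg _) (hnI 0)
  have hM0 : 0 ≤ nI + max w 0 * σ N := by positivity
  have h2a : (0:ℝ) < 2 * a := by linarith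
  have hZ0 : 0 ≤ Zfun a VR VF I σ w N :=
    setIntegral_nonneg measurableSet_Iic fun v _ =>
      setIntegral_nonneg measurableSet_Icc fun v' _ => (Real.exp_pos _).le
  set m := min (1 / (nI + max w 0 * σ N)) (VF - VR) with hm
  rcases le_or_gt m 0 with hm0 | hm0
  · have hmz : m = 0 := le_antisymm hm0 (le_min (by positivity) hd0.le)
    rw [hmz]
    simpa using hZ0
  -- main case : m > 0
  have hMpos : 0 < nI + max w 0 * σ N := by
    rcases hM0.lt_or_eq with h | h
    · exact h
    · exfalso
      rw [hm, ← h] at hm0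
      have h0 : (1:ℝ) / 0 = 0 := by norm_num
      rw [h0] at hm0
      have := min_le_left (0:ℝ) (VF - VR)
      linarith
  have hc : 2 * I w + 2 * w * σ N ≤ 2 * (nI + max w 0 * σ N) := by
    have h1 : I w ≤ nI := le_of_abs_le (hnI w)
    have h2 : w * σ N ≤ max w 0 * σ N := mul_le_mul_of_nonneg_right (le_max_left _ _) hσN
    nlinarith
  have hmM : m * (nI + max w 0 * σ N) ≤ 1 := by
    have h1 : m ≤ 1 / (nI + max w 0 * σ N) := min_le_left _ _
    calc m * (nI + max w 0 * σ N) ≤ (1 / (nI + max w 0 * σ N)) * (nI + max w 0 * σ N) :=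
          mul_le_mul_of_nonneg_right h1 hM0
      _ = 1 := by field_simp
  have hmd : m ≤ VF - VR := min_le_right _ _
  clear_value m
  clear hm
  have hδ0 : 0 < m / 2 := by positivity
  have hδd : m / 2 ≤ (VF - VR) / 2 := by linarith
  -- exponent lower bound
  have hexp : ∀ v ∈ Icc (VF - m / 2) VF, ∀ v' ∈ Icc v VF,
      -K ≤ (v' - v) * (v' + v - (2 * I w + 2 * w * σ N)) / (2 * a) := by
    rintro v ⟨hv1, hv2⟩ v' ⟨hv'1, hv'2⟩
    rw [hK, ← neg_div, div_le_div_iff_of_pos_right h2a]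
    have hB0 : 0 ≤ (VF - VR) ^ 2 / 2 + 1 + (VF - VR) * |VF| := by positivity
    have ht : 0 ≤ v' - v := sub_nonneg.2 hv'1
    have htδ : v' - v ≤ m / 2 := by linarith
    rcases le_or_gt 0 (v' + v - (2 * I w + 2 * w * σ N)) with hs | hs
    · nlinarith [mul_nonneg ht hs]
    · have h1 : (m / 2) * (v' + v - (2 * I w + 2 * w * σ N))
          ≤ (v' - v) * (v' + v - (2 * I w + 2 * w * σ N)) :=
        mul_le_mul_of_nonpos_right htδ hs.le
      have h2 : 2 * VF - 2 * (m / 2) - 2 * (nI + max w 0 * σ N)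
          ≤ v' + v - (2 * I w + 2 * w * σ N) := by linarith
      have h3 : (m / 2) * (2 * VF - 2 * (m / 2) - 2 * (nI + max w 0 * σ N))
          ≤ (m / 2) * (v' + v - (2 * I w + 2 * w * σ N)) :=
        mul_le_mul_of_nonneg_left h2 hδ0.le
      have hVFa : -|VF| ≤ VF := neg_abs_le VF
      have h2δV : m * |VF| ≤ (VF - VR) * |VF| :=
        mul_le_mul_of_nonneg_right hmd (abs_nonneg VF)
      have hδsq : 2 * (m / 2) ^ 2 ≤ (VF - VR) ^ 2 / 2 := by nlinarith
      have h4 : -((VF - VR) ^ 2 / 2 + 1 + (VF - VR) * |VF|)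
          ≤ (m / 2) * (2 * VF - 2 * (m / 2) - 2 * (nI + max w 0 * σ N)) := by
        nlinarith [mul_le_mul_of_nonneg_left hVFa (by positivity : (0:ℝ) ≤ m)]
      exact le_trans h4 (le_trans h3 h1)
  -- rewrite Zfun with c = 2 * I w + 2 * w * σ N
  have hZc : Zfun a VR VF I σ w N = ∫ v in Iic VF, ∫ v' in Icc (max VR v) VF,
      Real.exp ((v' - v) * (v' + v - (2 * I w + 2 * w * σ N)) / (2 * a)) := by
    unfold Zfun
    refine setIntegral_congr_fun measurableSet_Iic fun v _ => ?_
    refine setIntegral_congr_fun measurableSet_Icc fun v' _ => ?_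
    congr 1
    ring
  have hmain := mainA a VR VF (2 * I w + 2 * w * σ N) K (m / 2) ha hV hδ0 hδd hexp
  rw [hZc]
  calc Real.exp (-K) / 8 * m ^ 2 = Real.exp (-K) * ((m / 2) ^ 2 / 2) := by ring
    _ ≤ _ := hmain
end

section
/- Let N̄ ∈ [0,∞) be such that σ(N̄) > 0. Then Z_{N̄,I}(w) tends to 0 as w → +∞. -/
open MeasureTheory Real Set Filter Topology

lemma expc_integrableOn (c R : ℝ) (hc : 0 < c) :
    IntegrableOn (fun v => Real.exp (c * (v - R))) (Iic R) := by
  have hcont : Continuous fun x : ℝ => Real.exp (c * (x - R)) := by fun_prop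
  have hderiv : ∀ x : ℝ, HasDerivAt (fun x => Real.exp (c * (x - R)) / c)
      (Real.exp (c * (x - R))) x := by
    intro x
    have h0 : HasDerivAt (fun x : ℝ => c * (x - R)) c x := by
      simpa using ((hasDerivAt_id x).sub_const R).const_mul c
    have h1 := (h0.exp).div_const c
    rw [mul_div_assoc, div_self hc.ne', mul_one] at h1
    exact h1
  apply integrableOn_Iic_of_intervalIntegral_norm_bounded (1/c) R
    (a := fun i : ℝ => i) (l := atBot)
    (fun i => hcont.integrableOn_Ioc) tendsto_id
  filter_upwards [eventually_le_atBot R] with i hi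
  have hcalc : ∫ x in i..R, ‖Real.exp (c * (x - R))‖ = ∫ x in i..R, Real.exp (c * (x - R)) := by
    congr 1; funext x; exact Real.norm_of_nonneg (Real.exp_nonneg _)
  rw [hcalc, intervalIntegral.integral_eq_sub_of_hasDerivAt (fun x _ => hderiv x)
    (hcont.intervalIntegrable _ _)]
  have h1 : Real.exp (c * (R - R)) = 1 := by simp
  have h2 : 0 < Real.exp (c * (i - R)) := Real.exp_pos _
  rw [h1, div_sub_div_same, div_le_div_iff₀ hc hc]
  nlinarith

lemma expc_integral (c R : ℝ) (hc : 0 < c) :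
    ∫ v in Iic R, Real.exp (c * (v - R)) = 1 / c := by
  have hderiv : ∀ x ∈ Iic R, HasDerivAt (fun x => Real.exp (c * (x - R)) / c)
      (Real.exp (c * (x - R))) x := by
    intro x _
    have h0 : HasDerivAt (fun x : ℝ => c * (x - R)) c x := by
      simpa using ((hasDerivAt_id x).sub_const R).const_mul c
    have h1 := (h0.exp).div_const c
    rw [mul_div_assoc, div_self hc.ne', mul_one] at h1
    exact h1
  have hlim : Tendsto (fun x => Real.exp (c * (x - R)) / c) atBot (𝓝 (0:ℝ)) := by
    have h1 : Tendsto (fun x : ℝ => c * (x - R)) atBot atBot := by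
      apply Tendsto.const_mul_atBot hc
      exact (tendsto_atBot_add_const_right atBot (-R) tendsto_id).congr fun x => (sub_eq_add_neg x R).symm
    have := (Real.tendsto_exp_atBot.comp h1).div_const c
    simpa using this
  rw [integral_Iic_of_hasDerivAt_of_tendsto' hderiv (expc_integrableOn c R hc) hlim]
  simp

lemma Zfun_le (a VR VF : ℝ) (ha : 0 < a) (hV : VR < VF) (I σ : ℝ → ℝ) (nI : ℝ)
    (hI : ∀ x, |I x| ≤ nI) (N w c : ℝ) (hc : 0 < c)
    (hca : a * c = w * σ N - nI - VF) :
    Zfun a VR VF I σ w N ≤ 1 / c * (1 / c + (VF - VR)) := by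
  -- the dominating function
  set h : ℝ → ℝ := fun v => Real.exp (-c * (max VR v - v)) / c with hh
  -- inner bound
  have hinner : ∀ v ∈ Iic VF,
      (∫ v' in Icc (max VR v) VF,
        Real.exp ((v' - v) * (v' + v - 2 * I w - 2 * w * σ N) / (2 * a))) ≤ h v := by
    intro v hv
    set A := max VR v with hA
    have hAF : A ≤ VF := max_le hV.le hv
    have hmono : ∀ v' ∈ Icc A VF,
        Real.exp ((v' - v) * (v' + v - 2 * I w - 2 * w * σ N) / (2 * a))
          ≤ Real.exp (-c * (v' - v)) := by
      intro v' hv'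
      apply Real.exp_le_exp.2
      have h1 : v ≤ v' := le_trans (le_max_right _ _) hv'.1
      have h2 : v' ≤ VF := hv'.2
      have h3 : -nI ≤ I w := (abs_le.1 (hI w)).1
      have hvF : v ≤ VF := hv
      have key : v' + v - 2 * I w - 2 * w * σ N ≤ -(2 * (a * c)) := by
        rw [hca]; linarith
      have step : (v' - v) * (v' + v - 2 * I w - 2 * w * σ N)
          ≤ (v' - v) * (-(2 * (a * c))) :=
        mul_le_mul_of_nonneg_left key (by linarith)
      calc (v' - v) * (v' + v - 2 * I w - 2 * w * σ N) / (2 * a)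
          ≤ (v' - v) * (-(2 * (a * c))) / (2 * a) := by
            exact (div_le_div_iff_of_pos_right (by linarith : (0:ℝ) < 2 * a)).2 step
        _ = -c * (v' - v) := by field_simp
    have hcont1 : Continuous fun v' : ℝ =>
        Real.exp ((v' - v) * (v' + v - 2 * I w - 2 * w * σ N) / (2 * a)) := by fun_prop
    have hcont2 : Continuous fun v' : ℝ => Real.exp (-c * (v' - v)) := by fun_prop
    have hint1 : IntegrableOn (fun v' : ℝ =>
        Real.exp ((v' - v) * (v' + v - 2 * I w - 2 * w * σ N) / (2 * a))) (Icc A VF) volume :=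
      hcont1.integrableOn_Icc
    have hint2 : IntegrableOn (fun v' : ℝ => Real.exp (-c * (v' - v))) (Icc A VF) volume :=
      hcont2.integrableOn_Icc
    have hmono' := setIntegral_mono_on hint1 hint2
      measurableSet_Icc hmono
    refine hmono'.trans ?_
    -- compute the integral of exp (-c * (v' - v)) over Icc A VF
    have hderiv : ∀ x : ℝ, HasDerivAt (fun x => -(Real.exp (-c * (x - v)) / c))
        (Real.exp (-c * (x - v))) x := by
      intro x
      have h0 : HasDerivAt (fun x : ℝ => -c * (x - v)) (-c) x := by
        simpa using ((hasDerivAt_id x).sub_const v).const_mul (-c)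
      have h1 := ((h0.exp).div_const c).neg
      rw [mul_div_assoc, neg_div, div_self hc.ne', mul_neg, mul_one, neg_neg] at h1
      exact h1
    have hval : ∫ v' in Icc A VF, Real.exp (-c * (v' - v))
        = -(Real.exp (-c * (VF - v)) / c) - -(Real.exp (-c * (A - v)) / c) := by
      rw [integral_Icc_eq_integral_Ioc, ← intervalIntegral.integral_of_le hAF]
      exact intervalIntegral.integral_eq_sub_of_hasDerivAt (fun x _ => hderiv x)
        (hcont2.intervalIntegrable _ _)
    rw [hval, hh]
    have h3 : 0 ≤ Real.exp (-c * (VF - v)) / c := le_of_lt (div_pos (Real.exp_pos _) hc)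
    simp only
    linarith
  -- integrability of h on Iic VF
  have hI1 : IntegrableOn h (Iic VR) := by
    apply MeasureTheory.IntegrableOn.congr_fun
      (Integrable.div_const (expc_integrableOn c VR hc) c) _ measurableSet_Iic
    intro v hv
    simp only [hh]
    rw [max_eq_left (hv : v ≤ VR)]
    ring_nf
  have hI2 : IntegrableOn h (Ioc VR VF) := by
    have hcont : Continuous h := by
      apply Continuous.div_const
      apply Real.continuous_exp.comp
      fun_prop
    exact hcont.integrableOn_Ioc
  have hIh : IntegrableOn h (Iic VF) := by
    rw [← Iic_union_Ioc_eq_Iic hV.le]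
    exact hI1.union hI2
  -- monotonicity of the outer integral
  have houter : Zfun a VR VF I σ w N ≤ ∫ v in Iic VF, h v := by
    unfold Zfun
    apply integral_mono_of_nonneg
    · exact ae_of_all _ fun v => integral_nonneg fun v' => Real.exp_nonneg _
    · exact hIh
    · exact (ae_restrict_iff' measurableSet_Iic).2 (ae_of_all _ hinner)
  refine houter.trans ?_
  -- compute the integral of h over Iic VF
  have hsplit : ∫ v in Iic VF, h v = (∫ v in Iic VR, h v) + ∫ v in Ioc VR VF, h v := by
    rw [← Iic_union_Ioc_eq_Iic hV.le,
      setIntegral_union (Iic_disjoint_Ioc le_rfl) measurableSet_Ioc hI1 hI2]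
  have hval1 : ∫ v in Iic VR, h v = (1 / c) / c := by
    have heq : ∀ v ∈ Iic VR, h v = Real.exp (c * (v - VR)) / c := by
      intro v hv
      simp only [hh]
      rw [max_eq_left (hv : v ≤ VR)]
      ring_nf
    rw [setIntegral_congr_fun measurableSet_Iic heq, integral_div, expc_integral c VR hc]
  have hval2 : ∫ v in Ioc VR VF, h v = (VF - VR) * (1 / c) := by
    have heq : ∀ v ∈ Ioc VR VF, h v = 1 / c := by
      intro v hv
      simp only [hh]
      rw [max_eq_right (le_of_lt hv.1)]
      simp
    rw [setIntegral_congr_fun measurableSet_Ioc heq, setIntegral_const, smul_eq_mul,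
      Real.volume_real_Ioc_of_le hV.le]
  rw [hsplit, hval1, hval2]
  apply le_of_eq
  ring

/-- `Z_{N̄,I}(w) → 0` as `w → +∞` when `σ(N̄) > 0` (Lemma 3.2, estimate (3.11)). -/
theorem stmt2 (a VR VF : ℝ) (ha : 0 < a) (hV : VR < VF)
    (I : ℝ → ℝ) (hImeas : Measurable I) (nI : ℝ) (hI : ∀ x, |I x| ≤ nI)
    (σ : ℝ → ℝ) (hσ0 : ∀ N, 0 ≤ N → 0 ≤ σ N)
    (N : ℝ) (hN : 0 ≤ N) (hσN : 0 < σ N) :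
    Filter.Tendsto (fun w => Zfun a VR VF I σ w N) Filter.atTop (nhds 0) := by
  set c : ℝ → ℝ := fun w => (w * σ N - nI - VF) / a with hcdef
  have hct : Tendsto c atTop atTop := by
    apply Tendsto.atTop_div_const ha
    have h1 : Tendsto (fun w : ℝ => w * σ N) atTop atTop :=
      Tendsto.atTop_mul_const hσN tendsto_id
    have h2 := tendsto_atTop_add_const_right atTop (-nI - VF) h1
    refine h2.congr fun w => by ring
  have h0 : Tendsto (fun w => 1 / c w) atTop (𝓝 (0:ℝ)) := by
    exact hct.inv_tendsto_atTop.congr fun w => (one_div _).symm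
  apply squeeze_zero' (g := fun w => 1 / c w * (1 / c w + (VF - VR)))
  · exact Eventually.of_forall fun w =>
      setIntegral_nonneg measurableSet_Iic fun v _ =>
        integral_nonneg fun v' => Real.exp_nonneg _
  · filter_upwards [hct.eventually_gt_atTop 0] with w hw
    apply Zfun_le a VR VF ha hV I σ nI hI N w (c w) hw
    rw [hcdef]
    field_simp
  · have := h0.mul (h0.add (tendsto_const_nhds (x := VF - VR)))
    simpa using this
end

section
/- Let N̄ ∈ [0,∞) be such that σ(N̄) > 0. Then Z_{N̄,I}(w) tends to +∞ as w → −∞. -/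
open MeasureTheory Real Set Filter

lemma aux_expbound (T c v v' : ℝ) (hv' : |v'| ≤ T) :
    (v' - v) * (v' + v - c) ≤ T ^ 2 + |c| * T + c * v - v ^ 2 := by
  have h1 : -(c * v') ≤ |c| * T := by
    calc -(c * v') ≤ |c * v'| := neg_le_abs _
      _ = |c| * |v'| := abs_mul _ _
      _ ≤ |c| * T := mul_le_mul_of_nonneg_left hv' (abs_nonneg c)
  have h2 : v' ^ 2 ≤ T ^ 2 := by
    rw [← sq_abs v']
    exact pow_le_pow_left₀ (abs_nonneg _) hv' 2
  nlinarith [h1, h2]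

lemma aux_gauss (a c : ℝ) (ha : 0 < a) :
    Integrable (fun v : ℝ => Real.exp ((c * v - v ^ 2) / (2 * a))) := by
  have h1 : Integrable (fun v : ℝ => Real.exp (-(1 / (2 * a)) * v ^ 2)) :=
    integrable_exp_neg_mul_sq (by positivity)
  have h2 : Integrable (fun v : ℝ => Real.exp (-(1 / (2 * a)) * (v - c / 2) ^ 2)) :=
    h1.comp_sub_right (c / 2)
  have h3 := h2.const_mul (Real.exp (c ^ 2 / (8 * a)))
  have he : (fun v : ℝ => Real.exp (c ^ 2 / (8 * a)) *
      Real.exp (-(1 / (2 * a)) * (v - c / 2) ^ 2))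
      = fun v : ℝ => Real.exp ((c * v - v ^ 2) / (2 * a)) := by
    funext v
    rw [← Real.exp_add]
    congr 1
    field_simp
    ring
  rw [← he]
  exact h3

lemma aux_int (a VR VF c : ℝ) (ha : 0 < a) (hV : VR < VF) :
    IntegrableOn (fun v => ∫ v' in Set.Icc (max VR v) VF,
      Real.exp ((v' - v) * (v' + v - c) / (2 * a))) (Set.Iic VF) := by
  set T : ℝ := max |VR| |VF| with hT
  set K : ℝ := Real.exp ((T ^ 2 + |c| * T) / (2 * a)) with hK
  have hsm : StronglyMeasurable (fun v => ∫ v' in Set.Icc (max VR v) VF,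
      Real.exp ((v' - v) * (v' + v - c) / (2 * a))) := by
    have hset : MeasurableSet {p : ℝ × ℝ | p.2 ∈ Set.Icc (max VR p.1) VF} := by
      have h1 : MeasurableSet {p : ℝ × ℝ | max VR p.1 ≤ p.2} :=
        measurableSet_le (measurable_const.max measurable_fst) measurable_snd
      have h2 : MeasurableSet {p : ℝ × ℝ | p.2 ≤ VF} :=
        measurableSet_le measurable_snd measurable_const
      have he : {p : ℝ × ℝ | p.2 ∈ Set.Icc (max VR p.1) VF}
          = {p : ℝ × ℝ | max VR p.1 ≤ p.2} ∩ {p : ℝ × ℝ | p.2 ≤ VF} := by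
        ext p; simp [Set.mem_Icc]
      rw [he]; exact h1.inter h2
    have hgc : Continuous fun p : ℝ × ℝ =>
        Real.exp ((p.2 - p.1) * (p.2 + p.1 - c) / (2 * a)) := by fun_prop
    have hind := hgc.stronglyMeasurable.indicator hset
    have key : (fun v => ∫ v' in Set.Icc (max VR v) VF,
        Real.exp ((v' - v) * (v' + v - c) / (2 * a)))
        = fun v => ∫ v', ({p : ℝ × ℝ | p.2 ∈ Set.Icc (max VR p.1) VF}.indicator
          (fun p : ℝ × ℝ => Real.exp ((p.2 - p.1) * (p.2 + p.1 - c) / (2 * a)))) (v, v') := by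
      funext v
      rw [← MeasureTheory.integral_indicator
        (measurableSet_Icc : MeasurableSet (Set.Icc (max VR v) VF))]
      refine integral_congr_ae (Filter.Eventually.of_forall fun v' => ?_)
      by_cases h : v' ∈ Set.Icc (max VR v) VF
      · exact (Set.indicator_of_mem h _).trans (Set.indicator_of_mem
          (show (v, v') ∈ {p : ℝ × ℝ | p.2 ∈ Set.Icc (max VR p.1) VF} from h)
          (fun p : ℝ × ℝ => Real.exp ((p.2 - p.1) * (p.2 + p.1 - c) / (2 * a)))).symm
      · exact (Set.indicator_of_notMem h _).trans (Set.indicator_of_notMem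
          (show (v, v') ∉ {p : ℝ × ℝ | p.2 ∈ Set.Icc (max VR p.1) VF} from h)
          (fun p : ℝ × ℝ => Real.exp ((p.2 - p.1) * (p.2 + p.1 - c) / (2 * a)))).symm
    rw [key]
    exact hind.integral_prod_right'
  have hgint := (aux_gauss a c ha).const_mul ((VF - VR) * K)
  apply Integrable.mono' hgint.integrableOn hsm.aestronglyMeasurable
  filter_upwards [self_mem_ae_restrict (measurableSet_Iic : MeasurableSet (Set.Iic VF))] with v hv
  have hnn : 0 ≤ ∫ v' in Set.Icc (max VR v) VF,
      Real.exp ((v' - v) * (v' + v - c) / (2 * a)) :=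
    setIntegral_nonneg measurableSet_Icc fun _ _ => (Real.exp_pos _).le
  rw [Real.norm_of_nonneg hnn]
  have hvVF : v ≤ VF := hv
  have hmle : max VR v ≤ VF := max_le hV.le hvVF
  have hconstK : (0:ℝ) ≤ K * Real.exp ((c * v - v ^ 2) / (2 * a)) := by positivity
  calc ∫ v' in Set.Icc (max VR v) VF, Real.exp ((v' - v) * (v' + v - c) / (2 * a))
      ≤ ∫ _v' in Set.Icc (max VR v) VF, K * Real.exp ((c * v - v ^ 2) / (2 * a)) := by
        apply setIntegral_mono_on
        · exact (by fun_prop : Continuous fun v' : ℝ =>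
            Real.exp ((v' - v) * (v' + v - c) / (2 * a))).integrableOn_Icc
        · exact integrableOn_const measure_Icc_lt_top.ne
        · exact measurableSet_Icc
        · intro v' hv'
          have habs : |v'| ≤ T := by
            rw [abs_le]
            refine ⟨?_, ?_⟩
            · have h1 : VR ≤ v' := le_trans (le_max_left _ _) hv'.1
              have h2 : -|VR| ≤ VR := neg_abs_le VR
              have h3 : |VR| ≤ T := le_max_left _ _
              linarith
            · have h1 : v' ≤ VF := hv'.2
              have h2 : VF ≤ |VF| := le_abs_self VF
              have h3 : |VF| ≤ T := le_max_right _ _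
              linarith
          rw [hK, ← Real.exp_add, ← add_div]
          apply Real.exp_le_exp.2
          have hb := aux_expbound T c v v' habs
          gcongr
          linarith
      _ = (volume (Set.Icc (max VR v) VF)).toReal *
          (K * Real.exp ((c * v - v ^ 2) / (2 * a))) := by
        rw [setIntegral_const, smul_eq_mul, measureReal_def]
      _ ≤ (VF - VR) * (K * Real.exp ((c * v - v ^ 2) / (2 * a))) := by
        apply mul_le_mul_of_nonneg_right ?_ hconstK
        rw [Real.volume_Icc, ENNReal.toReal_ofReal (by linarith)]
        have : VR ≤ max VR v := le_max_left _ _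
        linarith
      _ = (VF - VR) * K * Real.exp ((c * v - v ^ 2) / (2 * a)) := by ring

/-- `Z_{N̄,I}(w) → +∞` as `w → −∞` when `σ(N̄) > 0` (Lemma 3.2, estimate (3.11)). -/
theorem stmt3 (a VR VF : ℝ) (ha : 0 < a) (hV : VR < VF)
    (I : ℝ → ℝ) (hImeas : Measurable I) (nI : ℝ) (hI : ∀ x, |I x| ≤ nI)
    (σ : ℝ → ℝ) (hσ0 : ∀ N, 0 ≤ N → 0 ≤ σ N)
    (N : ℝ) (hN : 0 ≤ N) (hσN : 0 < σ N) :
    Filter.Tendsto (fun w => Zfun a VR VF I σ w N) Filter.atBot Filter.atTop := by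
  set δ : ℝ := (VF - VR) / 3 with hδdef
  have hδ : 0 < δ := by
    have h : 0 < VF - VR := sub_pos.2 hV
    positivity
  set m : ℝ := VR + δ with hmdef
  set M : ℝ := VR + 2 * δ with hMdef
  have hVFM : VF - M = δ := by rw [hMdef, hδdef]; ring
  have hmVF : m ≤ VF := by rw [hmdef]; rw [hδdef] at hδ ⊢; linarith
  set F : ℝ → ℝ → ℝ := fun w v => ∫ v' in Set.Icc (max VR v) VF,
      Real.exp ((v' - v) * (v' + v - 2 * I w - 2 * w * σ N) / (2 * a)) with hFdef
  have hZ : ∀ w, Zfun a VR VF I σ w N = ∫ v in Set.Iic VF, F w v := fun w => rfl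
  have hFnonneg : ∀ w v, 0 ≤ F w v := fun w v =>
    setIntegral_nonneg measurableSet_Icc (fun _ _ => (Real.exp_pos _).le)
  have hFint : ∀ w, IntegrableOn (F w) (Set.Iic VF) := by
    intro w
    have h := aux_int a VR VF (2 * I w + 2 * w * σ N) ha hV
    have he : F w = fun v => ∫ v' in Set.Icc (max VR v) VF,
        Real.exp ((v' - v) * (v' + v - (2 * I w + 2 * w * σ N)) / (2 * a)) := by
      funext v
      simp only [hFdef, sub_sub]
    rw [he]
    exact h
  set w₀ : ℝ := (M + VR - 2 * nI) / (2 * σ N) with hw₀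
  have hkey : ∀ w ≤ w₀,
      δ * δ * Real.exp (δ * (M + VR - 2 * nI - 2 * w * σ N) / (2 * a))
        ≤ Zfun a VR VF I σ w N := by
    intro w hw
    have hnum : 0 ≤ M + VR - 2 * nI - 2 * w * σ N := by
      have h1 : 2 * w * σ N ≤ 2 * w₀ * σ N := by nlinarith
      have h2 : 2 * w₀ * σ N = M + VR - 2 * nI := by
        rw [hw₀]; field_simp
      linarith
    set E : ℝ := δ * (M + VR - 2 * nI - 2 * w * σ N) / (2 * a) with hE
    have hstep : ∀ v ∈ Set.Icc VR m, δ * Real.exp E ≤ F w v := by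
      intro v hv
      have hmax : max VR v = v := max_eq_right hv.1
      have hvm : v ≤ m := hv.2
      have hvM : v ≤ M := by rw [hMdef]; rw [hmdef] at hvm; linarith
      have hIcc : Set.Icc M VF ⊆ Set.Icc v VF := Set.Icc_subset_Icc hvM le_rfl
      have hcontv : Continuous fun v' : ℝ =>
          Real.exp ((v' - v) * (v' + v - 2 * I w - 2 * w * σ N) / (2 * a)) := by fun_prop
      calc δ * Real.exp E = ∫ _ in Set.Icc M VF, Real.exp E := by
            rw [setIntegral_const, measureReal_def, Real.volume_Icc,
              ENNReal.toReal_ofReal (by linarith : (0:ℝ) ≤ VF - M), hVFM, smul_eq_mul]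
        _ ≤ ∫ v' in Set.Icc M VF,
            Real.exp ((v' - v) * (v' + v - 2 * I w - 2 * w * σ N) / (2 * a)) := by
            apply setIntegral_mono_on
            · exact integrableOn_const measure_Icc_lt_top.ne
            · exact hcontv.integrableOn_Icc
            · exact measurableSet_Icc
            · intro v' hv'
              apply Real.exp_le_exp.2
              rw [hE]
              have h1 : δ ≤ v' - v := by
                have := hv'.1
                rw [hMdef] at this
                rw [hmdef] at hvm
                linarith
              have h2 : M + VR - 2 * nI - 2 * w * σ N
                  ≤ v' + v - 2 * I w - 2 * w * σ N := by
                have hIw : I w ≤ nI := (abs_le.1 (hI w)).2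
                have := hv'.1
                have := hv.1
                linarith
              have hmul : δ * (M + VR - 2 * nI - 2 * w * σ N)
                  ≤ (v' - v) * (v' + v - 2 * I w - 2 * w * σ N) :=
                mul_le_mul h1 h2 hnum (by linarith)
              exact (div_le_div_iff_of_pos_right (by positivity)).2 hmul
        _ ≤ ∫ v' in Set.Icc v VF,
            Real.exp ((v' - v) * (v' + v - 2 * I w - 2 * w * σ N) / (2 * a)) := by
            apply setIntegral_mono_set hcontv.integrableOn_Icc
            · filter_upwards with x using (Real.exp_pos _).le
            · exact hIcc.eventuallyLE
        _ = F w v := by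
            simp only [hFdef, hmax]
    rw [hZ w]
    calc δ * δ * Real.exp E = ∫ _ in Set.Icc VR m, δ * Real.exp E := by
          rw [setIntegral_const, measureReal_def, Real.volume_Icc, smul_eq_mul]
          rw [show m - VR = δ by rw [hmdef]; ring]
          rw [ENNReal.toReal_ofReal hδ.le]
          ring
      _ ≤ ∫ v in Set.Icc VR m, F w v := by
          apply setIntegral_mono_on
          · exact integrableOn_const measure_Icc_lt_top.ne
          · exact (hFint w).mono_set (fun x hx => le_trans hx.2 hmVF)
          · exact measurableSet_Icc
          · exact hstep
      _ ≤ ∫ v in Set.Iic VF, F w v := by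
          apply setIntegral_mono_set (hFint w)
          · filter_upwards [self_mem_ae_restrict
              (measurableSet_Iic : MeasurableSet (Set.Iic VF))] with x _ using hFnonneg w x
          · exact HasSubset.Subset.eventuallyLE
              (fun x hx => le_trans hx.2 hmVF : Set.Icc VR m ⊆ Set.Iic VF)
  have h1 : Tendsto (fun w : ℝ =>
      δ * δ * Real.exp (δ * (M + VR - 2 * nI - 2 * w * σ N) / (2 * a))) atBot atTop := by
    apply Tendsto.const_mul_atTop (by positivity : (0:ℝ) < δ * δ)
    apply Real.tendsto_exp_atTop.comp
    have he : (fun w : ℝ => δ * (M + VR - 2 * nI - 2 * w * σ N) / (2 * a))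
        = fun w : ℝ => δ * (M + VR - 2 * nI) / (2 * a) + (δ * σ N / a) * (-w) := by
      funext w
      field_simp
      ring
    rw [he]
    apply tendsto_atTop_add_const_left
    exact tendsto_neg_atBot_atTop.const_mul_atTop (by positivity)
  exact tendsto_atTop_mono' atBot ((eventually_le_atBot w₀).mono fun w hw => hkey w hw) h1
end

section
/- Assume σ : [0,∞) → [0,∞) is differentiable at a point N̄ > 0. Then for every fixed w ∈ ℝ the map N ↦ Z_{N,I}(w) is differentiable at N̄ with derivative equal to − w σ'(N̄) · ∫_{v=−∞}^{V_F} ∫_{v'=max(V_R,v)}^{V_F} ((v'−v)/a) · exp( (v'−v)(v'+v−2I(w)−2w σ(N̄)) / (2a) ) dv' dv. -/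
open MeasureTheory Real Set Filter

/-- Measurability of the inner integral as a function of `v`. -/
lemma sm_helper6 (VR VF : ℝ) (F : ℝ → ℝ → ℝ)
    (hF : Continuous fun p : ℝ × ℝ => F p.1 p.2) :
    StronglyMeasurable fun v => ∫ v' in Set.Icc (max VR v) VF, F v v' := by
  have hS : MeasurableSet {p : ℝ × ℝ | max VR p.1 ≤ p.2 ∧ p.2 ≤ VF} :=
    (measurableSet_le (measurable_const.max measurable_fst) measurable_snd).inter
      (measurableSet_le measurable_snd measurable_const)
  have hsm : StronglyMeasurable
      (Set.indicator {p : ℝ × ℝ | max VR p.1 ≤ p.2 ∧ p.2 ≤ VF}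
        fun p : ℝ × ℝ => F p.1 p.2) :=
    hF.stronglyMeasurable.indicator hS
  have h := StronglyMeasurable.integral_prod_right' (ν := (volume : Measure ℝ)) hsm
  convert h using 1
  funext v
  rw [← integral_indicator measurableSet_Icc]
  congr 1

/-- Differentiation under the (inner) integral sign. -/
lemma inner_hasDerivAt6 (a c w : ℝ) (ha : 0 < a) (VR VF v : ℝ) (s : ℝ) :
    HasDerivAt
      (fun t => ∫ v' in Set.Icc (max VR v) VF,
        Real.exp ((v' - v) * (v' + v - 2 * c - 2 * w * t) / (2 * a)))
      (∫ v' in Set.Icc (max VR v) VF,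
        Real.exp ((v' - v) * (v' + v - 2 * c - 2 * w * s) / (2 * a))
          * ((v' - v) * -(2 * w) / (2 * a))) s := by
  have h2a : (0:ℝ) < 2 * a := by linarith
  set R := |v| + |VR| + |VF| with hR
  set Q := R + 2 * |c| + 2 * |w| * (|s| + 1) with hQ
  have hR0 : 0 ≤ R := by positivity
  have hQ0 : 0 ≤ Q := by positivity
  have hmain := hasDerivAt_integral_of_dominated_loc_of_deriv_le
      (μ := volume.restrict (Set.Icc (max VR v) VF)) (x₀ := s)
      (F := fun t v' => Real.exp ((v' - v) * (v' + v - 2 * c - 2 * w * t) / (2 * a)))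
      (F' := fun t v' => Real.exp ((v' - v) * (v' + v - 2 * c - 2 * w * t) / (2 * a))
        * ((v' - v) * -(2 * w) / (2 * a)))
      (bound := fun _ => Real.exp (R * Q / (2 * a)) * (R * (2 * |w|) / (2 * a)))
      (Metric.ball_mem_nhds _ one_pos)
      (Eventually.of_forall fun t => (Continuous.aestronglyMeasurable (by fun_prop)))
      (Continuous.integrableOn_Icc (by fun_prop))
      (Continuous.aestronglyMeasurable (by fun_prop))
      ?_ (integrableOn_const measure_Icc_lt_top.ne) ?_
  · exact hmain.2
  · -- bound
    filter_upwards [ae_restrict_mem measurableSet_Icc] with v' hv' t ht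
    obtain ⟨hv'1, hv'2⟩ := hv'
    have hVRv' : VR ≤ v' := le_trans (le_max_left _ _) hv'1
    have htle : |t| ≤ |s| + 1 := by
      have h1 := abs_sub_abs_le_abs_sub t s
      have h2 : |t - s| < 1 := by
        rw [Metric.mem_ball, Real.dist_eq] at ht; exact ht
      linarith
    have hv'abs : |v'| ≤ |VR| + |VF| := by
      rw [abs_le]
      constructor
      · linarith [neg_abs_le VR, abs_nonneg VF]
      · linarith [le_abs_self VF, abs_nonneg VR]
    have habs1 : |v' - v| ≤ R := by
      calc |v' - v| ≤ |v'| + |v| := abs_sub v' v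
        _ ≤ R := by rw [hR]; linarith
    have habs2 : |v' + v - 2 * c - 2 * w * t| ≤ Q := by
      rw [hQ, hR]
      rw [abs_le]
      constructor <;>
        nlinarith [le_abs_self c, neg_abs_le c, le_abs_self v, neg_abs_le v,
          le_abs_self v', neg_abs_le v',
          le_abs_self (w * t), neg_abs_le (w * t), abs_mul w t, abs_nonneg w,
          mul_le_mul_of_nonneg_left htle (abs_nonneg w)]
    have hnum : (v' - v) * (v' + v - 2 * c - 2 * w * t) ≤ R * Q :=
      calc (v' - v) * (v' + v - 2 * c - 2 * w * t)
          ≤ |(v' - v) * (v' + v - 2 * c - 2 * w * t)| := le_abs_self _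
        _ = |v' - v| * |v' + v - 2 * c - 2 * w * t| := abs_mul _ _
        _ ≤ R * Q := mul_le_mul habs1 habs2 (abs_nonneg _) hR0
    have hXle : (v' - v) * (v' + v - 2 * c - 2 * w * t) / (2 * a) ≤ R * Q / (2 * a) :=
      (div_le_div_iff_of_pos_right h2a).mpr hnum
    rw [Real.norm_eq_abs, abs_mul, Real.abs_exp, abs_div, abs_mul, abs_neg, abs_mul,
      abs_of_pos h2a, abs_two]
    refine mul_le_mul (Real.exp_le_exp.mpr hXle) ?_ (by positivity) (Real.exp_pos _).le
    gcongr
  · -- differentiability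
    refine Eventually.of_forall fun v' => fun t _ => ?_
    have h1 : HasDerivAt (fun t : ℝ => 2 * w * t) (2 * w) t := by
      simpa using (hasDerivAt_id t).const_mul (2 * w)
    have h2 : HasDerivAt (fun t : ℝ => v' + v - 2 * c - 2 * w * t) (-(2 * w)) t :=
      h1.const_sub _
    have h3 : HasDerivAt (fun t : ℝ => (v' - v) * (v' + v - 2 * c - 2 * w * t))
        ((v' - v) * -(2 * w)) t := h2.const_mul _
    exact (h3.div_const (2 * a)).exp

set_option maxHeartbeats 1000000 in
lemma outer_hasDerivAt6 (a c w : ℝ) (ha : 0 < a) (VR VF : ℝ) (hV : VR < VF) (s₀ : ℝ) :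
    HasDerivAt
      (fun s => ∫ v in Set.Iic VF, ∫ v' in Set.Icc (max VR v) VF,
        Real.exp ((v' - v) * (v' + v - 2 * c - 2 * w * s) / (2 * a)))
      (∫ v in Set.Iic VF, ∫ v' in Set.Icc (max VR v) VF,
        Real.exp ((v' - v) * (v' + v - 2 * c - 2 * w * s₀) / (2 * a))
          * ((v' - v) * -(2 * w) / (2 * a))) s₀ := by
  have h2a : (0:ℝ) < 2 * a := by linarith
  have h4a : (0:ℝ) < 1 / (4 * a) := by positivity
  set D := |c| + |w| * (|s₀| + 1) with hD
  set M := |VR| + |VF| + D with hM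
  set E := Real.exp ((M ^ 2 + D ^ 2) / (2 * a)) with hE
  have hD0 : 0 ≤ D := by positivity
  have hM0 : 0 ≤ M := by positivity
  have hE0 : 0 < E := Real.exp_pos _
  -- pointwise Gaussian bound on the integrand
  have hexp : ∀ t : ℝ, |t - s₀| ≤ 1 → ∀ v : ℝ, ∀ v' ∈ Set.Icc (max VR v) VF,
      Real.exp ((v' - v) * (v' + v - 2 * c - 2 * w * t) / (2 * a))
        ≤ E * Real.exp (-(1 / (4 * a)) * v ^ 2) := by
    intro t ht v v' hv'
    obtain ⟨hv'1, hv'2⟩ := hv'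
    have hVRv' : VR ≤ v' := le_trans (le_max_left _ _) hv'1
    have htabs : |t| ≤ |s₀| + 1 := by
      have := abs_sub_abs_le_abs_sub t s₀; linarith
    have hd : |c + w * t| ≤ D := by
      rw [hD]
      have h2 : |w * t| ≤ |w| * (|s₀| + 1) := by
        rw [abs_mul]; exact mul_le_mul_of_nonneg_left htabs (abs_nonneg w)
      linarith [abs_add_le c (w * t)]
    set d := c + w * t with hdd
    clear_value d
    have hd2 : d ^ 2 ≤ D ^ 2 := by nlinarith [sq_abs d, abs_nonneg d]
    have h1 : (v' - d) ^ 2 ≤ M ^ 2 := by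
      have hv'abs : |v'| ≤ |VR| + |VF| := by
        rw [abs_le]
        constructor
        · linarith [neg_abs_le VR, abs_nonneg VF]
        · linarith [le_abs_self VF, abs_nonneg VR]
      have habs : |v' - d| ≤ M := by
        calc |v' - d| ≤ |v'| + |d| := abs_sub v' d
          _ ≤ M := by rw [hM]; linarith
      nlinarith [abs_nonneg (v' - d), sq_abs (v' - d)]
    have h2 : v ^ 2 / 2 - D ^ 2 ≤ (v - d) ^ 2 := by
      nlinarith [sq_nonneg (v - 2 * d), hd2]
    have hnum : (v' - v) * (v' + v - 2 * c - 2 * w * t) = (v' - d) ^ 2 - (v - d) ^ 2 := by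
      rw [hdd]; ring
    rw [hE, ← Real.exp_add]
    apply Real.exp_le_exp.mpr
    rw [hnum]
    have heq : (M ^ 2 + D ^ 2) / (2 * a) + -(1 / (4 * a)) * v ^ 2
        = (M ^ 2 + D ^ 2 - v ^ 2 / 2) / (2 * a) := by
      field_simp; ring
    rw [heq]
    apply (div_le_div_iff_of_pos_right h2a).mpr
    nlinarith [h1, h2]
  -- measure of the inner interval
  have hmeas_le : ∀ v : ℝ, (volume (Set.Icc (max VR v) VF)).toReal ≤ VF - VR := by
    intro v
    rw [Real.volume_Icc]
    rcases le_total (max VR v) VF with h | h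
    · rw [ENNReal.toReal_ofReal (by linarith)]
      have := le_max_left VR v; linarith
    · rw [ENNReal.ofReal_eq_zero.mpr (by linarith)]; simp; linarith
  -- norm bound on the inner integral of the derivative, for t in the ball
  have hnorm : ∀ t : ℝ, |t - s₀| ≤ 1 → ∀ v : ℝ, v ≤ VF →
      ‖∫ v' in Set.Icc (max VR v) VF,
          Real.exp ((v' - v) * (v' + v - 2 * c - 2 * w * t) / (2 * a))
            * ((v' - v) * -(2 * w) / (2 * a))‖
        ≤ (VF - VR) * ((VF - v) * (2 * |w|) / (2 * a) * (E * Real.exp (-(1 / (4 * a)) * v ^ 2))) := by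
    intro t ht v hv
    have hC0 : 0 ≤ (VF - v) * (2 * |w|) / (2 * a) * (E * Real.exp (-(1 / (4 * a)) * v ^ 2)) := by
      have : 0 ≤ VF - v := by linarith
      positivity
    calc ‖∫ v' in Set.Icc (max VR v) VF,
            Real.exp ((v' - v) * (v' + v - 2 * c - 2 * w * t) / (2 * a))
              * ((v' - v) * -(2 * w) / (2 * a))‖
        ≤ ((VF - v) * (2 * |w|) / (2 * a) * (E * Real.exp (-(1 / (4 * a)) * v ^ 2)))
            * (volume (Set.Icc (max VR v) VF)).toReal := by
          apply norm_setIntegral_le_of_norm_le_const measure_Icc_lt_top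
          · intro v' hv'
            obtain ⟨hv'1, hv'2⟩ := hv'
            have hvv' : v ≤ v' := le_trans (le_max_right _ _) hv'1
            rw [Real.norm_eq_abs, abs_mul, Real.abs_exp, abs_div, abs_mul, abs_neg, abs_mul,
              abs_of_pos h2a, abs_two]
            have hb1 := hexp t ht v v' ⟨hv'1, hv'2⟩
            have hb2 : |v' - v| * (2 * |w|) / (2 * a) ≤ (VF - v) * (2 * |w|) / (2 * a) := by
              gcongr
              rw [abs_of_nonneg (by linarith)]
              linarith
            calc Real.exp ((v' - v) * (v' + v - 2 * c - 2 * w * t) / (2 * a))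
                  * (|v' - v| * (2 * |w|) / (2 * a))
                ≤ (E * Real.exp (-(1 / (4 * a)) * v ^ 2))
                    * ((VF - v) * (2 * |w|) / (2 * a)) :=
                  mul_le_mul hb1 hb2 (by positivity) (by positivity)
              _ = (VF - v) * (2 * |w|) / (2 * a) * (E * Real.exp (-(1 / (4 * a)) * v ^ 2)) := by
                  ring
      _ ≤ ((VF - v) * (2 * |w|) / (2 * a) * (E * Real.exp (-(1 / (4 * a)) * v ^ 2))) * (VF - VR) :=
          mul_le_mul_of_nonneg_left (hmeas_le v) hC0
      _ = (VF - VR) * ((VF - v) * (2 * |w|) / (2 * a) * (E * Real.exp (-(1 / (4 * a)) * v ^ 2))) := by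
          ring
  -- integrability of the Gaussian bounds
  have hbound_int : Integrable
      (fun v : ℝ => (VF - VR) * ((VF - v) * (2 * |w|) / (2 * a) * (E * Real.exp (-(1 / (4 * a)) * v ^ 2))))
      (volume.restrict (Set.Iic VF)) := by
    have h1 : Integrable (fun v : ℝ => Real.exp (-(1 / (4 * a)) * v ^ 2)) :=
      integrable_exp_neg_mul_sq h4a
    have h2 : Integrable (fun v : ℝ => v * Real.exp (-(1 / (4 * a)) * v ^ 2)) :=
      integrable_mul_exp_neg_mul_sq h4a
    have h3 := (h1.const_mul ((VF - VR) * (VF * (2 * |w|) / (2 * a) * E))).sub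
      (h2.const_mul ((VF - VR) * ((2 * |w|) / (2 * a) * E)))
    apply Integrable.integrableOn
    refine h3.congr (Eventually.of_forall fun v => ?_)
    simp only [Pi.sub_apply]
    ring
  have hbound2_int : Integrable
      (fun v : ℝ => (VF - VR) * (E * Real.exp (-(1 / (4 * a)) * v ^ 2)))
      (volume.restrict (Set.Iic VF)) :=
    Integrable.integrableOn (((integrable_exp_neg_mul_sq h4a).const_mul ((VF - VR) * E)).congr
      (Eventually.of_forall fun v => by ring))
  -- measurability of the inner integrals
  have hsm1 : ∀ t : ℝ, AEStronglyMeasurable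
      (fun v => ∫ v' in Set.Icc (max VR v) VF,
        Real.exp ((v' - v) * (v' + v - 2 * c - 2 * w * t) / (2 * a)))
      (volume.restrict (Set.Iic VF)) := by
    intro t
    exact (sm_helper6 VR VF _ (by fun_prop)).aestronglyMeasurable.restrict
  have hsm2 : AEStronglyMeasurable
      (fun v => ∫ v' in Set.Icc (max VR v) VF,
        Real.exp ((v' - v) * (v' + v - 2 * c - 2 * w * s₀) / (2 * a))
          * ((v' - v) * -(2 * w) / (2 * a)))
      (volume.restrict (Set.Iic VF)) :=
    (sm_helper6 VR VF _ (by fun_prop)).aestronglyMeasurable.restrict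
  -- integrability of the integrand at s₀
  have hint : Integrable
      (fun v => ∫ v' in Set.Icc (max VR v) VF,
        Real.exp ((v' - v) * (v' + v - 2 * c - 2 * w * s₀) / (2 * a)))
      (volume.restrict (Set.Iic VF)) := by
    apply Integrable.mono' hbound2_int (hsm1 s₀)
    filter_upwards [ae_restrict_mem measurableSet_Iic] with v hv
    calc ‖∫ v' in Set.Icc (max VR v) VF,
            Real.exp ((v' - v) * (v' + v - 2 * c - 2 * w * s₀) / (2 * a))‖
        ≤ (E * Real.exp (-(1 / (4 * a)) * v ^ 2)) * (volume (Set.Icc (max VR v) VF)).toReal := by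
          apply norm_setIntegral_le_of_norm_le_const measure_Icc_lt_top
          · intro v' hv'
            rw [Real.norm_eq_abs, Real.abs_exp]
            exact hexp s₀ (by simp) v v' hv'
      _ ≤ (E * Real.exp (-(1 / (4 * a)) * v ^ 2)) * (VF - VR) :=
          mul_le_mul_of_nonneg_left (hmeas_le v) (by positivity)
      _ = (VF - VR) * (E * Real.exp (-(1 / (4 * a)) * v ^ 2)) := by ring
  -- apply the dominated-derivative theorem
  have hmain := hasDerivAt_integral_of_dominated_loc_of_deriv_le
      (μ := volume.restrict (Set.Iic VF)) (x₀ := s₀)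
      (F := fun t v => ∫ v' in Set.Icc (max VR v) VF,
        Real.exp ((v' - v) * (v' + v - 2 * c - 2 * w * t) / (2 * a)))
      (F' := fun t v => ∫ v' in Set.Icc (max VR v) VF,
        Real.exp ((v' - v) * (v' + v - 2 * c - 2 * w * t) / (2 * a))
          * ((v' - v) * -(2 * w) / (2 * a)))
      (bound := fun v => (VF - VR) * ((VF - v) * (2 * |w|) / (2 * a)
        * (E * Real.exp (-(1 / (4 * a)) * v ^ 2))))
      (Metric.ball_mem_nhds _ one_pos)
      (Eventually.of_forall fun t => hsm1 t)
      hint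
      (sm_helper6 VR VF _ (by fun_prop)).aestronglyMeasurable.restrict
      ?_ hbound_int ?_
  · exact hmain.2
  · filter_upwards [ae_restrict_mem measurableSet_Iic] with v hv t ht
    have : |t - s₀| ≤ 1 := by
      rw [Metric.mem_ball, Real.dist_eq] at ht; linarith
    exact hnorm t this v hv
  · exact Eventually.of_forall fun v t _ => inner_hasDerivAt6 a c w ha VR VF v t


/-- Differentiability of `N ↦ Z_{N,I}(w)` and the explicit formula for its derivative. -/
theorem stmt6 (a VR VF : ℝ) (ha : 0 < a) (hV : VR < VF)
    (I : ℝ → ℝ) (hImeas : Measurable I) (nI : ℝ) (hI : ∀ x, |I x| ≤ nI)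
    (σ : ℝ → ℝ) (hσ0 : ∀ N, 0 ≤ N → 0 ≤ σ N)
    (Nbar σ' : ℝ) (hNbar : 0 < Nbar) (hσdiff : HasDerivAt σ σ' Nbar)
    (w : ℝ) :
    HasDerivAt (fun N => Zfun a VR VF I σ w N)
      (-w * σ' *
        ∫ v in Set.Iic VF, ∫ v' in Set.Icc (max VR v) VF,
          ((v' - v) / a) *
            Real.exp ((v' - v) * (v' + v - 2 * I w - 2 * w * σ Nbar) / (2 * a)))
      Nbar := by
  have hout := outer_hasDerivAt6 a (I w) w ha VR VF hV (σ Nbar)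
  have hcomp := HasDerivAt.comp Nbar hout hσdiff
  have hfun : ((fun s => ∫ v in Set.Iic VF, ∫ v' in Set.Icc (max VR v) VF,
      Real.exp ((v' - v) * (v' + v - 2 * I w - 2 * w * s) / (2 * a))) ∘ σ)
      = fun N => Zfun a VR VF I σ w N := by
    funext N
    simp only [Function.comp, Zfun]
  have hval : (∫ v in Set.Iic VF, ∫ v' in Set.Icc (max VR v) VF,
      Real.exp ((v' - v) * (v' + v - 2 * I w - 2 * w * σ Nbar) / (2 * a))
        * ((v' - v) * -(2 * w) / (2 * a)))
      = -w * ∫ v in Set.Iic VF, ∫ v' in Set.Icc (max VR v) VF,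
        ((v' - v) / a) *
          Real.exp ((v' - v) * (v' + v - 2 * I w - 2 * w * σ Nbar) / (2 * a)) := by
    rw [← integral_const_mul]
    refine integral_congr_ae (Eventually.of_forall fun v => ?_)
    dsimp only
    rw [← integral_const_mul]
    refine integral_congr_ae (Eventually.of_forall fun v' => ?_)
    have ha' : a ≠ 0 := ne_of_gt ha
    field_simp
  have heq : (∫ v in Set.Iic VF, ∫ v' in Set.Icc (max VR v) VF,
      Real.exp ((v' - v) * (v' + v - 2 * I w - 2 * w * σ Nbar) / (2 * a))
        * ((v' - v) * -(2 * w) / (2 * a))) * σ'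
      = -w * σ' *
        ∫ v in Set.Iic VF, ∫ v' in Set.Icc (max VR v) VF,
          ((v' - v) / a) *
            Real.exp ((v' - v) * (v' + v - 2 * I w - 2 * w * σ Nbar) / (2 * a)) := by
    rw [hval]; ring
  rw [hfun, heq] at hcomp
  exact hcomp
end

section
/- In the case σ(N) = N, for every bounded measurable I : ℝ → ℝ and every M > 0 there exists R > 0 such that for all w ≤ 0 and N̄ ≥ 0 with −w N̄ ≥ R one has Z_{N̄,I}(w) ≥ M; that is, Z_{N̄,I}(w) → +∞ as −w N̄ → +∞. -/
open MeasureTheory Real Set Filter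

/-- Inner integral of the partition function, as a named function. -/
noncomputable def Fn (a VR VF b c : ℝ) : ℝ → ℝ := fun v =>
  ∫ v' in Set.Icc (max VR v) VF, Real.exp ((v' - v) * (v' + v - b - c) / (2 * a))

lemma gauss_int (a C : ℝ) (ha : 0 < a) :
    Integrable (fun v : ℝ => Real.exp (-((v ^ 2 - C * v) / (2 * a)))) := by
  have h1 : Integrable (fun x : ℝ => Real.exp (-(1 / (2 * a)) * x ^ 2)) :=
    integrable_exp_neg_mul_sq (by positivity)
  have h2 := (h1.comp_sub_right (C / 2)).const_mul (Real.exp (C ^ 2 / (8 * a)))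
  refine h2.congr ?_
  filter_upwards with v
  rw [← Real.exp_add]
  congr 1
  field_simp
  ring

lemma aux (a VR VF b c : ℝ) (ha : 0 < a) (hV : VR < VF) (hT : 0 ≤ 2 * VR - b - c) :
    (VF - VR) / 3 * ((VF - VR) / 3 *
        Real.exp ((VF - VR) / 3 * (2 * VR - b - c) / (2 * a))) ≤
      ∫ v in Set.Iic VF, Fn a VR VF b c v := by
  set d : ℝ := (VF - VR) / 3 with hd
  have hd0 : 0 < d := by rw [hd]; linarith
  set C : ℝ := b + c with hC
  set g : ℝ → ℝ := fun t => (t ^ 2 - C * t) / (2 * a) with hg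
  have hgc : Continuous g := by fun_prop
  have hEc : ∀ v : ℝ, Continuous (fun v' => Real.exp ((v' - v) * (v' + v - b - c) / (2 * a))) := by
    intro v; fun_prop
  have hfac : ∀ v v' : ℝ, Real.exp ((v' - v) * (v' + v - b - c) / (2 * a))
      = Real.exp (g v') * Real.exp (-g v) := by
    intro v v'
    rw [← Real.exp_add]
    congr 1
    simp only [hg, hC]
    field_simp
    ring
  have hFfac : ∀ v : ℝ, Fn a VR VF b c v
      = (∫ v' in Set.Icc (max VR v) VF, Real.exp (g v')) * Real.exp (-g v) := by
    intro v
    simp only [Fn, hfac]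
    rw [integral_mul_const]
  have hgexpc : Continuous fun t => Real.exp (g t) := Real.continuous_exp.comp hgc
  set K : ℝ := ∫ t in Set.Icc VR VF, Real.exp (g t) with hK
  have hFnn : ∀ v, 0 ≤ Fn a VR VF b c v := fun v =>
    integral_nonneg fun v' => (Real.exp_pos _).le
  have hFle : ∀ v, Fn a VR VF b c v ≤ K * Real.exp (-g v) := by
    intro v
    rw [hFfac]
    have hsub : Set.Icc (max VR v) VF ⊆ Set.Icc VR VF := Set.Icc_subset_Icc (le_max_left _ _) le_rfl
    have h1 : (∫ v' in Set.Icc (max VR v) VF, Real.exp (g v')) ≤ K :=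
      setIntegral_mono_set (hgexpc.integrableOn_Icc)
        (Eventually.of_forall fun t => (Real.exp_pos _).le) hsub.eventuallyLE
    exact mul_le_mul_of_nonneg_right h1 (Real.exp_pos _).le |>.trans_eq rfl
  have hgauss : Integrable (fun v : ℝ => Real.exp (-g v)) := by
    simpa [hg] using gauss_int a C ha
  -- measurability of Fn on Iic VF
  have hprim : Continuous (fun s : ℝ => ∫ t in s..VF, Real.exp (g t)) := by
    have h := intervalIntegral.continuous_primitive
      (fun x y => hgexpc.intervalIntegrable x y) VF (μ := volume)
    have heq : (fun s : ℝ => ∫ t in s..VF, Real.exp (g t))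
        = fun s => -∫ t in VF..s, Real.exp (g t) := by
      funext s; rw [intervalIntegral.integral_symm]
    rw [heq]; exact h.neg
  have hFcont : Continuous (fun v =>
      (∫ t in (max VR v)..VF, Real.exp (g t)) * Real.exp (-g v)) :=
    (hprim.comp (continuous_const.max continuous_id)).mul
      (Real.continuous_exp.comp hgc.neg)
  have hFeq : ∀ v ∈ Set.Iic VF, Fn a VR VF b c v
      = (∫ t in (max VR v)..VF, Real.exp (g t)) * Real.exp (-g v) := by
    intro v hv
    rw [hFfac]
    congr 1
    rw [intervalIntegral.integral_of_le (max_le hV.le hv), ← integral_Icc_eq_integral_Ioc]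
  have hFmeas : AEStronglyMeasurable (Fn a VR VF b c) (volume.restrict (Set.Iic VF)) :=
    hFcont.aestronglyMeasurable.congr
      ((ae_restrict_iff' measurableSet_Iic).2 (ae_of_all _ fun v hv => (hFeq v hv).symm))
  have hFint : IntegrableOn (Fn a VR VF b c) (Set.Iic VF) := by
    refine Integrable.mono' ((hgauss.const_mul K).integrableOn) hFmeas ?_
    filter_upwards with v
    rw [Real.norm_eq_abs, abs_of_nonneg (hFnn v)]
    exact hFle v
  -- lower bound on Icc VR (VR + d)
  have hsub1 : Set.Icc VR (VR + d) ⊆ Set.Iic VF := by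
    intro x hx
    simp only [Set.mem_Iic]
    have := hx.2
    rw [hd] at *
    simp only [Set.mem_Icc] at hx
    linarith [hx.2]
  have hconstlb : ∀ v ∈ Set.Icc VR (VR + d),
      d * Real.exp (d * (2 * VR - b - c) / (2 * a)) ≤ Fn a VR VF b c v := by
    intro v hv
    have hmaxle : max VR v ≤ VR + 2 * d := max_le (by linarith) (by linarith [hv.2])
    have hsub2 : Set.Icc (VR + 2 * d) VF ⊆ Set.Icc (max VR v) VF :=
      Set.Icc_subset_Icc hmaxle le_rfl
    have hEint : IntegrableOn (fun v' => Real.exp ((v' - v) * (v' + v - b - c) / (2 * a)))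
        (Set.Icc (max VR v) VF) := (hEc v).integrableOn_Icc
    have h1 : (∫ v' in Set.Icc (VR + 2 * d) VF,
        Real.exp ((v' - v) * (v' + v - b - c) / (2 * a))) ≤ Fn a VR VF b c v :=
      setIntegral_mono_set hEint (Eventually.of_forall fun t => (Real.exp_pos _).le)
        hsub2.eventuallyLE
    have h2 : ∀ v' ∈ Set.Icc (VR + 2 * d) VF,
        Real.exp (d * (2 * VR - b - c) / (2 * a)) ≤
          Real.exp ((v' - v) * (v' + v - b - c) / (2 * a)) := by
      intro v' hv'
      apply Real.exp_le_exp.2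
      have key : d * (2 * VR - b - c) ≤ (v' - v) * (v' + v - b - c) := by
        have hX : 2 * VR - b - c ≤ v' + v - b - c := by
          have := hv'.1; have := hv.1; linarith
        have hdv : d ≤ v' - v := by
          have := hv'.1; have := hv.2; linarith
        nlinarith
      have h2a : (0 : ℝ) < 2 * a := by linarith
      exact div_le_div_of_nonneg_right key h2a.le |>.trans_eq rfl
    have hconst : IntegrableOn (fun _ : ℝ => Real.exp (d * (2 * VR - b - c) / (2 * a)))
        (Set.Icc (VR + 2 * d) VF) := integrableOn_const measure_Icc_lt_top.ne
    have h3 := setIntegral_mono_on hconst (hEint.mono_set hsub2) measurableSet_Icc h2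
    rw [setIntegral_const] at h3
    have hvol : (volume (Set.Icc (VR + 2 * d) VF)).toReal = d := by
      rw [Real.volume_Icc, ENNReal.toReal_ofReal (by rw [hd]; linarith)]
      rw [hd]; ring
    rw [measureReal_def, hvol] at h3
    calc d * Real.exp (d * (2 * VR - b - c) / (2 * a))
        = (volume (Set.Icc (VR + 2 * d) VF)).toReal •
            Real.exp (d * (2 * VR - b - c) / (2 * a)) := by rw [hvol]; simp
      _ ≤ _ := by
          rw [hvol] at *
          exact le_trans (by simpa using h3) h1
  -- assemble
  have hstep2 : (∫ v in Set.Icc VR (VR + d), Fn a VR VF b c v)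
      ≤ ∫ v in Set.Iic VF, Fn a VR VF b c v :=
    setIntegral_mono_set hFint (Eventually.of_forall hFnn) hsub1.eventuallyLE
  have hconst1 : IntegrableOn (fun _ : ℝ => d * Real.exp (d * (2 * VR - b - c) / (2 * a)))
      (Set.Icc VR (VR + d)) := integrableOn_const measure_Icc_lt_top.ne
  have hstep1 := setIntegral_mono_on hconst1 (hFint.mono_set hsub1) measurableSet_Icc hconstlb
  rw [setIntegral_const] at hstep1
  have hvol1 : (volume (Set.Icc VR (VR + d))).toReal = d := by
    rw [Real.volume_Icc, ENNReal.toReal_ofReal (by linarith)]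
    ring
  rw [measureReal_def, hvol1, smul_eq_mul] at hstep1
  calc d * (d * Real.exp (d * (2 * VR - b - c) / (2 * a)))
      ≤ ∫ v in Set.Icc VR (VR + d), Fn a VR VF b c v := hstep1
    _ ≤ _ := hstep2

/-- In the case `σ(N) = N`, `Z_{N̄,I}(w) → +∞` as `−w N̄ → +∞`
(Lemma 3.2, estimate (3.14)). -/
theorem stmt8 (a VR VF : ℝ) (ha : 0 < a) (hV : VR < VF)
    (I : ℝ → ℝ) (hImeas : Measurable I) (nI : ℝ) (hI : ∀ x, |I x| ≤ nI) :
    ∀ M : ℝ, 0 < M → ∃ R > 0, ∀ w N : ℝ, w ≤ 0 → 0 ≤ N → R ≤ -w * N →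
      M ≤ Zfun a VR VF I (fun x => x) w N := by
  intro M hM
  set d : ℝ := (VF - VR) / 3 with hd
  have hd0 : 0 < d := by rw [hd]; linarith
  set R : ℝ := max 1 (max (nI - VR + 1)
    (a / d * Real.log (M / d ^ 2) + (nI - VR) + 1)) with hR
  refine ⟨R, lt_of_lt_of_le one_pos (le_max_left _ _), ?_⟩
  intro w N hw hN hRS
  have hZ : Zfun a VR VF I (fun x => x) w N
      = ∫ v in Set.Iic VF, Fn a VR VF (2 * I w) (2 * w * N) v := rfl
  rw [hZ]
  have hRA : nI - VR + 1 ≤ R := le_trans (le_max_left _ _) (le_max_right _ _)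
  have hRB : a / d * Real.log (M / d ^ 2) + (nI - VR) + 1 ≤ R :=
    le_trans (le_max_right _ _) (le_max_right _ _)
  have hIw := abs_le.1 (hI w)
  have hX : 2 * VR - 2 * nI + 2 * R ≤ 2 * VR - 2 * I w - 2 * w * N := by
    have h1 : -(2 * (I w)) ≥ -(2 * nI) := by linarith [hIw.2]
    linarith [hRS]
  have hX0 : (0 : ℝ) ≤ 2 * VR - 2 * nI + 2 * R := by linarith
  have haux := aux a VR VF (2 * I w) (2 * w * N) ha hV (le_trans hX0 hX)
  rw [← hd] at haux
  refine le_trans ?_ haux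
  have hmono : Real.exp (d * (2 * VR - 2 * nI + 2 * R) / (2 * a))
      ≤ Real.exp (d * (2 * VR - 2 * I w - 2 * w * N) / (2 * a)) := by
    apply Real.exp_le_exp.2
    apply div_le_div_of_nonneg_right _ (by linarith : (0:ℝ) ≤ 2 * a)
    exact mul_le_mul_of_nonneg_left hX hd0.le
  refine le_trans ?_ (by nlinarith [hmono, hd0] :
    d * (d * Real.exp (d * (2 * VR - 2 * nI + 2 * R) / (2 * a)))
      ≤ d * (d * Real.exp (d * (2 * VR - 2 * I w - 2 * w * N) / (2 * a))))
  -- now the numeric bound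
  have hMd : 0 < M / d ^ 2 := by positivity
  have hlog : Real.log (M / d ^ 2) ≤ d * (2 * VR - 2 * nI + 2 * R) / (2 * a) := by
    rw [le_div_iff₀ (by linarith : (0:ℝ) < 2 * a)]
    have hmul : d * (a / d * Real.log (M / d ^ 2) + (nI - VR) + 1) ≤ d * R :=
      mul_le_mul_of_nonneg_left hRB hd0.le
    have hsimp : d * (a / d * Real.log (M / d ^ 2) + (nI - VR) + 1)
        = a * Real.log (M / d ^ 2) + d * (nI - VR) + d := by
      field_simp
    nlinarith [hmul, hsimp, hd0]
  have hexp : M / d ^ 2 ≤ Real.exp (d * (2 * VR - 2 * nI + 2 * R) / (2 * a)) := by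
    rw [← Real.exp_log hMd]
    exact Real.exp_le_exp.2 hlog
  rw [div_le_iff₀ (by positivity : (0:ℝ) < d ^ 2)] at hexp
  nlinarith [hexp]
end

section
/- Existence of a stationary state (Theorem 3.1, existence part): assume σ is of class C² with σ' ≥ 0 and σ_M = sup σ < ∞, let I : ℝ → ℝ be bounded measurable, and let H : ℝ → [0,∞) be measurable with ∫_ℝ H(w) dw = 1 and ∫_0^∞ w² H(w) dw < ∞. Then there exists N̄ > 0 such that a ∫_ℝ H(w) / Z_{N̄,I}(w) dw = N̄. -/
open MeasureTheory Real Set Filter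

/-- inner integral -/
noncomputable def Gin (a VR VF c v : ℝ) : ℝ :=
  ∫ v' in Set.Icc (max VR v) VF, Real.exp ((v' - v) * (v' + v - c) / (2 * a))

/-- the partition function as a function of `c` only -/
noncomputable def Zc (a VR VF c : ℝ) : ℝ := ∫ v in Set.Iic VF, Gin a VR VF c v

section lemmas

variable {a VR VF : ℝ}

lemma Zfun_eq (I σ : ℝ → ℝ) (w N : ℝ) :
    Zfun a VR VF I σ w N = Zc a VR VF (2 * I w + 2 * w * σ N) := by
  simp only [Zfun, Zc, Gin, sub_sub]

lemma Gin_nonneg (c v : ℝ) : 0 ≤ Gin a VR VF c v :=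
  setIntegral_nonneg measurableSet_Icc fun _ _ => (Real.exp_pos _).le

/-- pointwise bound on the integrand -/
lemma exp_le (ha : 0 < a) {v : ℝ} (hv : v ≤ VF) {c d : ℝ} (hd : |c| ≤ d) {v' : ℝ}
    (hv' : v' ∈ Set.Icc (max VR v) VF) :
    Real.exp ((v' - v) * (v' + v - c) / (2 * a)) ≤
      Real.exp (((max |VR| |VF|) ^ 2 - v ^ 2 + d * (VF - v)) / (2 * a)) := by
  apply Real.exp_le_exp.2
  apply div_le_div_of_nonneg_right ?_ (by linarith)
  obtain ⟨hv1, hv2⟩ := hv'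
  have h1 : v ≤ v' := le_trans (le_max_right _ _) hv1
  have h2 : VR ≤ v' := le_trans (le_max_left _ _) hv1
  have hc := abs_le.1 hd
  set K := max |VR| |VF| with hK
  have hsq : v' ^ 2 ≤ K ^ 2 := by
    apply sq_le_sq'
    · have h3 := le_max_left |VR| |VF|
      have h4 := neg_abs_le VR
      linarith
    · exact hv2.trans ((le_abs_self VF).trans (le_max_right _ _))
  nlinarith [mul_nonneg (by linarith : (0:ℝ) ≤ d + c) (by linarith : (0:ℝ) ≤ v' - v),
    mul_nonneg (by linarith [abs_nonneg c] : (0:ℝ) ≤ d) (by linarith : (0:ℝ) ≤ VF - v')]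

lemma Gin_le (ha : 0 < a) (hV : VR < VF) {v : ℝ} (hv : v ≤ VF) {c d : ℝ} (hd : |c| ≤ d) :
    Gin a VR VF c v ≤
      (VF - VR) * Real.exp (((max |VR| |VF|) ^ 2 - v ^ 2 + d * (VF - v)) / (2 * a)) := by
  set C := Real.exp (((max |VR| |VF|) ^ 2 - v ^ 2 + d * (VF - v)) / (2 * a)) with hC
  have h := norm_setIntegral_le_of_norm_le_const (μ := volume)
    (f := fun v' => Real.exp ((v' - v) * (v' + v - c) / (2 * a)))
    (s := Set.Icc (max VR v) VF) (C := C)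
    (by rw [Real.volume_Icc]; exact ENNReal.ofReal_lt_top)
    (fun x hx => by
      rw [Real.norm_eq_abs, abs_of_pos (Real.exp_pos _)]; exact exp_le ha hv hd hx)
  have hmax : max VR v ≤ VF := max_le hV.le hv
  calc (∫ v' in Set.Icc (max VR v) VF, Real.exp ((v' - v) * (v' + v - c) / (2 * a)))
      ≤ ‖∫ v' in Set.Icc (max VR v) VF, Real.exp ((v' - v) * (v' + v - c) / (2 * a))‖ :=
        le_abs_self _
    _ ≤ C * (volume (Set.Icc (max VR v) VF)).toReal := h
    _ ≤ C * (VF - VR) := by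
        apply mul_le_mul_of_nonneg_left ?_ (Real.exp_pos _).le
        rw [Real.volume_Icc, ENNReal.toReal_ofReal (by linarith)]
        linarith [le_max_left VR v]
    _ = (VF - VR) * C := mul_comm _ _

lemma bound_integrable (ha : 0 < a) (d : ℝ) :
    Integrable (fun v => (VF - VR) *
      Real.exp (((max |VR| |VF|) ^ 2 - v ^ 2 + d * (VF - v)) / (2 * a))) := by
  set K1 := (max |VR| |VF|) ^ 2
  have key : ∀ v : ℝ, Real.exp ((K1 - v ^ 2 + d * (VF - v)) / (2 * a)) =
      Real.exp ((K1 + d * VF + d ^ 2 / 4) / (2 * a)) *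
      Real.exp (-(1 / (2 * a)) * (v + d / 2) ^ 2) := by
    intro v
    rw [← Real.exp_add]
    congr 1
    field_simp
    ring
  simp_rw [key]
  exact (((integrable_exp_neg_mul_sq (by positivity : (0:ℝ) < 1 / (2 * a))).comp_add_right
    (d / 2)).const_mul _).const_mul _

lemma Gin_meas (c : ℝ) : StronglyMeasurable (fun v => Gin a VR VF c v) := by
  have hS : MeasurableSet {p : ℝ × ℝ | max VR p.1 ≤ p.2 ∧ p.2 ≤ VF} := by
    apply MeasurableSet.inter
    · exact measurableSet_le (measurable_const.max measurable_fst) measurable_snd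
    · exact measurableSet_le measurable_snd measurable_const
  have hF : StronglyMeasurable ({p : ℝ × ℝ | max VR p.1 ≤ p.2 ∧ p.2 ≤ VF}.indicator
      (fun p => Real.exp ((p.2 - p.1) * (p.2 + p.1 - c) / (2 * a)))) :=
    (Continuous.stronglyMeasurable (by continuity)).indicator hS
  have h := hF.integral_prod_right' (ν := volume)
  convert h using 1
  funext v
  rw [Gin, ← integral_indicator measurableSet_Icc]
  rfl

lemma Gin_integrable (ha : 0 < a) (hV : VR < VF) (c : ℝ) : IntegrableOn (fun v => Gin a VR VF c v) (Set.Iic VF) := by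
  apply Integrable.mono' ((bound_integrable (VR := VR) (VF := VF) ha |c|).integrableOn)
    ((Gin_meas c).aestronglyMeasurable.restrict)
  refine (ae_restrict_iff' measurableSet_Iic).2 (Filter.Eventually.of_forall fun v hv => ?_)
  rw [Real.norm_eq_abs, abs_of_nonneg (Gin_nonneg c v)]
  exact Gin_le ha hV hv le_rfl

lemma Zc_ge (ha : 0 < a) (hV : VR < VF) (c : ℝ) :
    Real.exp (-1) * (((VF - VR) / 2) *
      min ((VF - VR) / 2) (2 * a / (1 + 2 * (|VR| + |VF|) + max c 0))) ≤ Zc a VR VF c := by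
  have Gin_integrable' := Gin_integrable ha hV c
  set t := (VF - VR) / 2 with ht
  set M := 1 + 2 * (|VR| + |VF|) + max c 0 with hM
  have hMpos : 0 < M := by
    have := abs_nonneg VR; have := abs_nonneg VF; have := le_max_right c 0
    positivity
  set t' := min t (2 * a / M) with ht'
  have htpos : 0 < t := by rw [ht]; linarith
  have ht'pos : 0 < t' := lt_min htpos (by positivity)
  have ht'le : t' * M ≤ 2 * a := by
    rw [← le_div_iff₀ hMpos]; exact min_le_right _ _
  have hA : ∀ v ∈ Set.Icc VR (VR + t), Real.exp (-1) * t' ≤ Gin a VR VF c v := by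
    intro v hv
    obtain ⟨hv1, hv2⟩ := hv
    have hmax : max VR v = v := max_eq_right hv1
    have hsub : Set.Icc v (v + t') ⊆ Set.Icc (max VR v) VF := by
      rw [hmax]
      apply Set.Icc_subset_Icc le_rfl
      have : t' ≤ t := min_le_left _ _
      rw [ht] at *; linarith
    have hint : IntegrableOn (fun v' => Real.exp ((v' - v) * (v' + v - c) / (2 * a)))
        (Set.Icc (max VR v) VF) := Continuous.integrableOn_Icc (by continuity)
    have step1 : (∫ v' in Set.Icc v (v + t'), Real.exp ((v' - v) * (v' + v - c) / (2 * a)))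
        ≤ Gin a VR VF c v := by
      apply setIntegral_mono_set hint
        (Filter.Eventually.of_forall fun x => (Real.exp_pos _).le)
        (HasSubset.Subset.eventuallyLE hsub)
    have step0 : Real.exp (-1) * t' ≤
        ∫ v' in Set.Icc v (v + t'), Real.exp ((v' - v) * (v' + v - c) / (2 * a)) := by
      have hconst : (∫ _ in Set.Icc v (v + t'), Real.exp (-1)) = t' * Real.exp (-1) := by
        rw [setIntegral_const, measureReal_def, Real.volume_Icc, smul_eq_mul]
        congr 1
        rw [add_sub_cancel_left, ENNReal.toReal_ofReal ht'pos.le]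
      rw [mul_comm, ← hconst]
      apply setIntegral_mono_on
        (integrableOn_const (by rw [Real.volume_Icc]; exact ENNReal.ofReal_ne_top))
        (hint.mono_set hsub) measurableSet_Icc
      intro v' hv'
      obtain ⟨hx1, hx2⟩ := hv'
      apply Real.exp_le_exp.2
      rw [le_div_iff₀ (by linarith)]
      have hvVF : v ≤ VF := by rw [ht] at hv2; linarith
      have hv'VF : v' ≤ VF := by
        have : t' ≤ t := min_le_left _ _
        rw [ht] at *; linarith
      have habs1 : -(|VR| + |VF|) ≤ v := by
        have := neg_abs_le VR; have := abs_nonneg VF; linarith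
      have habs2 : -(|VR| + |VF|) ≤ v' := by linarith
      have hcM : v' + v - c ≥ -M := by
        have := le_max_left c 0; rw [hM]; linarith
      have h5 : (v' - v) * (-M) ≤ (v' - v) * (v' + v - c) :=
        mul_le_mul_of_nonneg_left (by linarith) (by linarith)
      have h6 : t' * (-M) ≤ (v' - v) * (-M) :=
        mul_le_mul_of_nonpos_right (by linarith) (by linarith)
      have h7 : t' * (-M) = -(t' * M) := by ring
      linarith
    linarith
  have hIccIic : Set.Icc VR (VR + t) ⊆ Set.Iic VF := fun x hx => by
    have := hx.2; rw [ht] at *; simp only [Set.mem_Iic]; linarith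
  have hB : IntegrableOn (fun v => Gin a VR VF c v) (Set.Icc VR (VR + t)) :=
    Gin_integrable'.mono_set hIccIic
  have hC : (∫ _ in Set.Icc VR (VR + t), Real.exp (-1) * t')
      ≤ ∫ v in Set.Icc VR (VR + t), Gin a VR VF c v := by
    apply setIntegral_mono_on
      (integrableOn_const (by rw [Real.volume_Icc]; exact ENNReal.ofReal_ne_top))
      hB measurableSet_Icc hA
  have hconst2 : (∫ _ in Set.Icc VR (VR + t), Real.exp (-1) * t') = t * (Real.exp (-1) * t') := by
    rw [setIntegral_const, measureReal_def, Real.volume_Icc, smul_eq_mul]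
    congr 1
    rw [add_sub_cancel_left, ENNReal.toReal_ofReal htpos.le]
  have hD : (∫ v in Set.Icc VR (VR + t), Gin a VR VF c v) ≤ Zc a VR VF c := by
    apply setIntegral_mono_set Gin_integrable'
      (Filter.Eventually.of_forall fun v => Gin_nonneg c v)
      (HasSubset.Subset.eventuallyLE hIccIic)
  have : Real.exp (-1) * (t * t') = t * (Real.exp (-1) * t') := by ring
  linarith [hconst2 ▸ hC]

lemma Zc_pos (ha : 0 < a) (hV : VR < VF) (c : ℝ) : 0 < Zc a VR VF c := by
  refine lt_of_lt_of_le ?_ (Zc_ge ha hV c)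
  have h1 : 0 < (VF - VR) / 2 := by linarith
  have h2 : (0:ℝ) < 1 + 2 * (|VR| + |VF|) + max c 0 := by
    have := abs_nonneg VR; have := abs_nonneg VF; have := le_max_right c 0
    positivity
  have h3 : 0 < min ((VF - VR) / 2) (2 * a / (1 + 2 * (|VR| + |VF|) + max c 0)) :=
    lt_min h1 (by positivity)
  positivity

lemma Zc_inv_le (ha : 0 < a) (hV : VR < VF) (c : ℝ) :
    (Zc a VR VF c)⁻¹ ≤ (Real.exp 1 / ((VF - VR) / 2) * max (((VF - VR) / 2)⁻¹) ((2 * a)⁻¹)) *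
      (1 + 2 * (|VR| + |VF|) + max c 0) := by
  have hZ := Zc_ge ha hV c
  set t := (VF - VR) / 2 with ht
  set M := 1 + 2 * (|VR| + |VF|) + max c 0 with hM
  have hM1 : 1 ≤ M := by
    have := abs_nonneg VR; have := abs_nonneg VF; have := le_max_right c 0
    rw [hM]; linarith
  have hMpos : 0 < M := by linarith
  set t' := min t (2 * a / M) with ht'
  have htpos : 0 < t := by rw [ht]; linarith
  have ht'pos : 0 < t' := lt_min htpos (by positivity)
  have h0 : 0 < Real.exp (-1) * (t * t') := by positivity
  have h1 : (Zc a VR VF c)⁻¹ ≤ (Real.exp (-1) * (t * t'))⁻¹ := inv_anti₀ h0 hZ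
  have h2 : (Real.exp (-1) * (t * t'))⁻¹ = Real.exp 1 * t⁻¹ * t'⁻¹ := by
    rw [mul_inv, mul_inv, Real.exp_neg, inv_inv]; ring
  have h3 : t'⁻¹ ≤ M * max (t⁻¹) ((2 * a)⁻¹) := by
    rcases min_cases t (2 * a / M) with ⟨he, _⟩ | ⟨he, _⟩
    · rw [ht', he]
      calc t⁻¹ ≤ M * t⁻¹ := le_mul_of_one_le_left (by positivity) hM1
        _ ≤ M * max (t⁻¹) ((2 * a)⁻¹) :=
          mul_le_mul_of_nonneg_left (le_max_left _ _) hMpos.le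
    · rw [ht', he]
      have hfe : (2 * a / M)⁻¹ = M * (2 * a)⁻¹ := by field_simp
      rw [hfe]
      exact mul_le_mul_of_nonneg_left (le_max_right _ _) hMpos.le
  calc (Zc a VR VF c)⁻¹ ≤ Real.exp 1 * t⁻¹ * t'⁻¹ := h2 ▸ h1
    _ ≤ Real.exp 1 * t⁻¹ * (M * max (t⁻¹) ((2 * a)⁻¹)) :=
        mul_le_mul_of_nonneg_left h3 (by positivity)
    _ = (Real.exp 1 / t * max (t⁻¹) ((2 * a)⁻¹)) * M := by ring

lemma Zc_continuous (ha : 0 < a) (hV : VR < VF) : Continuous (fun c => Zc a VR VF c) := by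
  rw [continuous_iff_continuousAt]
  intro c₀
  apply continuousAt_of_dominated (bound := fun v => (VF - VR) *
      Real.exp (((max |VR| |VF|) ^ 2 - v ^ 2 + (|c₀| + 1) * (VF - v)) / (2 * a)))
  · exact Filter.Eventually.of_forall fun c => (Gin_meas c).aestronglyMeasurable.restrict
  · have hev : ∀ᶠ c in nhds c₀, |c| ≤ |c₀| + 1 := by
      have hball := Metric.closedBall_mem_nhds c₀ one_pos
      filter_upwards [hball] with c hc
      rw [Metric.mem_closedBall, Real.dist_eq] at hc
      calc |c| = |c₀ + (c - c₀)| := by ring_nf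
        _ ≤ |c₀| + |c - c₀| := abs_add_le _ _
        _ ≤ |c₀| + 1 := by linarith [abs_sub_comm c c₀ ▸ hc]
    filter_upwards [hev] with c hc
    refine (ae_restrict_iff' measurableSet_Iic).2 (Filter.Eventually.of_forall fun v hv => ?_)
    rw [Real.norm_eq_abs, abs_of_nonneg (Gin_nonneg c v)]
    exact Gin_le ha hV hv hc
  · exact (bound_integrable ha (|c₀| + 1)).integrableOn
  · refine (ae_restrict_iff' measurableSet_Iic).2 (Filter.Eventually.of_forall fun v hv => ?_)
    apply continuousAt_of_dominated (bound := fun _ =>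
      Real.exp (((max |VR| |VF|) ^ 2 - v ^ 2 + (|c₀| + 1) * (VF - v)) / (2 * a)))
    · exact Filter.Eventually.of_forall fun c =>
        (Continuous.aestronglyMeasurable (by continuity)).restrict
    · have hev : ∀ᶠ c in nhds c₀, |c| ≤ |c₀| + 1 := by
        have hball := Metric.closedBall_mem_nhds c₀ one_pos
        filter_upwards [hball] with c hc
        rw [Metric.mem_closedBall, Real.dist_eq] at hc
        calc |c| = |c₀ + (c - c₀)| := by ring_nf
          _ ≤ |c₀| + |c - c₀| := abs_add_le _ _
          _ ≤ |c₀| + 1 := by linarith [abs_sub_comm c c₀ ▸ hc]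
      filter_upwards [hev] with c hc
      refine (ae_restrict_iff' measurableSet_Icc).2 (Filter.Eventually.of_forall fun v' hv' => ?_)
      rw [Real.norm_eq_abs, abs_of_pos (Real.exp_pos _)]
      exact exp_le ha hv hc hv'
    · exact integrableOn_const (by rw [Real.volume_Icc]; exact ENNReal.ofReal_ne_top)
    · exact Filter.Eventually.of_forall fun v' => Continuous.continuousAt (by continuity)

end lemmas

/-- Existence of a stationary state (Theorem 3.1, existence part): there is a total
activity `N̄ > 0` solving the fixed point equation `a ∫ H(w)/Z_{N̄,I}(w) dw = N̄`. -/
theorem stmt10 (a VR VF : ℝ) (ha : 0 < a) (hV : VR < VF)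
    (σ : ℝ → ℝ) (hσC2 : ContDiff ℝ 2 σ) (hσ0 : ∀ N, 0 ≤ N → 0 ≤ σ N)
    (hσ' : ∀ N, 0 ≤ N → 0 ≤ deriv σ N)
    (σM : ℝ) (hσM : ∀ N, 0 ≤ N → σ N ≤ σM)
    (I : ℝ → ℝ) (hImeas : Measurable I) (nI : ℝ) (hI : ∀ x, |I x| ≤ nI)
    (H : ℝ → ℝ) (hHmeas : Measurable H) (hH0 : ∀ w, 0 ≤ H w)
    (hHint : Integrable H) (hH1 : (∫ w, H w) = 1)
    (hH2 : IntegrableOn (fun w => w ^ 2 * H w) (Set.Ioi 0)) :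
    ∃ N > 0, a * (∫ w, H w / Zfun a VR VF I σ w N) = N := by
  have hnI : 0 ≤ nI := (abs_nonneg (I 0)).trans (hI 0)
  have hσM0 : 0 ≤ σM := (hσ0 0 le_rfl).trans (hσM 0 le_rfl)
  set D0 : ℝ := Real.exp 1 / ((VF - VR) / 2) * max (((VF - VR) / 2)⁻¹) ((2 * a)⁻¹) with hD0
  have hD0pos : 0 < D0 := by
    have h1 : 0 < (VF - VR) / 2 := by linarith
    have h2 : 0 < max (((VF - VR) / 2)⁻¹) ((2 * a)⁻¹) :=
      lt_max_of_lt_left (by positivity)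
    positivity
  set G : ℝ → ℝ := fun w => H w * (D0 * (1 + 2 * (|VR| + |VF|) +
    (2 * nI + 2 * σM * max w 0))) with hG
  have hGnonneg : ∀ w, 0 ≤ G w := by
    intro w
    have h1 := hH0 w
    have h2 := abs_nonneg VR; have h3 := abs_nonneg VF
    have h4 := le_max_right w 0
    have h5 : (0:ℝ) ≤ max w 0 := le_max_right w 0
    positivity
  -- integrability of the dominating function
  have hmaxH : Integrable (fun w => max w 0 * H w) := by
    have heq : (fun w => max w 0 * H w) = (Set.Ioi (0:ℝ)).indicator (fun w => w * H w) := by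
      funext w
      rcases le_or_gt w 0 with h | h
      · rw [max_eq_right h, Set.indicator_of_notMem (by simpa using h), zero_mul]
      · rw [max_eq_left h.le, Set.indicator_of_mem (by simpa using h)]
    rw [heq, integrable_indicator_iff measurableSet_Ioi]
    apply Integrable.mono' (hHint.integrableOn.add hH2)
      ((measurable_id.mul hHmeas).aestronglyMeasurable.restrict)
    refine (ae_restrict_iff' measurableSet_Ioi).2 (Filter.Eventually.of_forall fun w hw => ?_)
    simp only [Set.mem_Ioi] at hw
    simp only [Real.norm_eq_abs, id_eq, Pi.add_apply, Pi.mul_apply]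
    rw [abs_of_nonneg (mul_nonneg hw.le (hH0 w))]
    nlinarith [sq_nonneg (w - 1), hH0 w, mul_nonneg (sq_nonneg (w - 1)) (hH0 w)]
  have hGint : Integrable G := by
    have heq : G = fun w => (D0 * (1 + 2 * (|VR| + |VF|) + 2 * nI)) * H w
        + (2 * D0 * σM) * (max w 0 * H w) := by
      funext w; rw [hG]; ring
    rw [heq]
    exact (hHint.const_mul _).add (hmaxH.const_mul _)
  -- key domination
  have hkey : ∀ s : ℝ, 0 ≤ s → s ≤ σM → ∀ w,
      H w / Zc a VR VF (2 * I w + 2 * w * s) ≤ G w := by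
    intro s hs0 hsM w
    rw [div_eq_mul_inv]
    have hZinv := Zc_inv_le ha hV (2 * I w + 2 * w * s)
    have hcle : max (2 * I w + 2 * w * s) 0 ≤ 2 * nI + 2 * σM * max w 0 := by
      have hIw := (abs_le.1 (hI w)).2
      have hws : w * s ≤ max w 0 * σM := by
        rcases le_or_gt 0 w with h | h
        · calc w * s ≤ w * σM := mul_le_mul_of_nonneg_left hsM h
            _ = max w 0 * σM := by rw [max_eq_left h]
        · calc w * s ≤ 0 := mul_nonpos_of_nonpos_of_nonneg h.le hs0
            _ ≤ max w 0 * σM := mul_nonneg (le_max_right w 0) hσM0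
      apply max_le
      · nlinarith
      · have : (0:ℝ) ≤ max w 0 * σM := mul_nonneg (le_max_right w 0) hσM0
        linarith
    calc H w * (Zc a VR VF (2 * I w + 2 * w * s))⁻¹
        ≤ H w * (D0 * (1 + 2 * (|VR| + |VF|) + max (2 * I w + 2 * w * s) 0)) :=
          mul_le_mul_of_nonneg_left hZinv (hH0 w)
      _ ≤ G w := by
          rw [hG]
          apply mul_le_mul_of_nonneg_left ?_ (hH0 w)
          apply mul_le_mul_of_nonneg_left ?_ hD0pos.le
          linarith
  have hnonneg : ∀ s : ℝ, ∀ w, 0 ≤ H w / Zc a VR VF (2 * I w + 2 * w * s) :=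
    fun s w => div_nonneg (hH0 w) (Zc_pos ha hV _).le
  have hmeas : ∀ s : ℝ, AEStronglyMeasurable
      (fun w => H w / Zc a VR VF (2 * I w + 2 * w * s)) volume := by
    intro s
    apply Measurable.aestronglyMeasurable
    apply hHmeas.div
    exact (Zc_continuous ha hV).measurable.comp
      ((hImeas.const_mul 2).add ((measurable_id.const_mul 2).mul_const s))
  have hint : ∀ s : ℝ, 0 ≤ s → s ≤ σM →
      Integrable (fun w => H w / Zc a VR VF (2 * I w + 2 * w * s)) := by
    intro s hs0 hsM
    apply Integrable.mono' hGint (hmeas s)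
    refine Filter.Eventually.of_forall fun w => ?_
    rw [Real.norm_eq_abs, abs_of_nonneg (hnonneg s w)]
    exact hkey s hs0 hsM w
  -- the fixed point function
  set f : ℝ → ℝ := fun N => ∫ w, H w / Zc a VR VF (2 * I w + 2 * w * σ (max N 0)) with hf
  have hσs : ∀ N : ℝ, 0 ≤ σ (max N 0) ∧ σ (max N 0) ≤ σM :=
    fun N => ⟨hσ0 _ (le_max_right N 0), hσM _ (le_max_right N 0)⟩
  have hf_cont : Continuous f := by
    rw [continuous_iff_continuousAt]
    intro N₀
    apply continuousAt_of_dominated (bound := G)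
    · exact Filter.Eventually.of_forall fun N => hmeas _
    · refine Filter.Eventually.of_forall fun N => Filter.Eventually.of_forall fun w => ?_
      rw [Real.norm_eq_abs, abs_of_nonneg (hnonneg _ w)]
      exact hkey _ (hσs N).1 (hσs N).2 w
    · exact hGint
    · refine Filter.Eventually.of_forall fun w => ?_
      have h1 : Continuous fun N : ℝ => 2 * I w + 2 * w * σ (max N 0) :=
        continuous_const.add (continuous_const.mul
          (hσC2.continuous.comp (continuous_id.max continuous_const)))
      exact ContinuousAt.div continuousAt_const
        (((Zc_continuous ha hV).comp h1).continuousAt)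
        (Zc_pos ha hV _).ne'
  set M0 : ℝ := ∫ w, G w with hM0
  have hM0nonneg : 0 ≤ M0 := integral_nonneg hGnonneg
  have hf_le : ∀ N, f N ≤ M0 := by
    intro N
    apply integral_mono_of_nonneg (Filter.Eventually.of_forall fun w => hnonneg _ w) hGint
    exact Filter.Eventually.of_forall fun w => hkey _ (hσs N).1 (hσs N).2 w
  have hf0 : 0 < f 0 := by
    rw [hf]
    apply (integral_pos_iff_support_of_nonneg (fun w => hnonneg _ w)
      (hint _ (hσs 0).1 (hσs 0).2)).2
    have hsupp : (Function.support fun w => H w / Zc a VR VF (2 * I w + 2 * w * σ (max 0 0)))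
        = Function.support H := by
      ext w
      simp only [Function.mem_support, ne_eq, div_eq_zero_iff, (Zc_pos ha hV _).ne',
        or_false]
    rw [hsupp]
    by_contra h
    push_neg at h
    have h0 : volume (Function.support H) = 0 := le_antisymm h zero_le
    have hae : H =ᵐ[volume] 0 := by
      rw [Filter.EventuallyEq, ae_iff]
      convert h0 using 2
      rfl
    rw [integral_congr_ae hae] at hH1
    simp at hH1
  set B : ℝ := a * M0 + 1 with hB
  have hB0 : 0 ≤ B := by positivity
  set g : ℝ → ℝ := fun N => a * f N - N with hg
  have hg_cont : ContinuousOn g (Set.Icc 0 B) :=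
    ((continuous_const.mul hf_cont).sub continuous_id).continuousOn
  have hg0 : 0 < g 0 := by
    show 0 < a * f 0 - 0
    have := mul_pos ha hf0
    linarith
  have hgB : g B < 0 := by
    have h1 := hf_le B
    have h2 : a * f B ≤ a * M0 := mul_le_mul_of_nonneg_left h1 ha.le
    show a * f B - B < 0
    rw [hB]
    linarith
  have hmem : (0:ℝ) ∈ Set.Ioo (g B) (g 0) := ⟨hgB, hg0⟩
  obtain ⟨N, hN, hgN⟩ := intermediate_value_Ioo' hB0 hg_cont hmem
  refine ⟨N, hN.1, ?_⟩
  have hmaxN : max N 0 = N := max_eq_left hN.1.le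
  have hfix : a * f N = N := by
    have : a * f N - N = 0 := hgN
    linarith
  have hZeq : (∫ w, H w / Zfun a VR VF I σ w N) = f N := by
    rw [hf]
    simp only [hmaxN]
    congr 1
    funext w
    rw [Zfun_eq]
  rw [hZeq, hfix]
end

section
/- Existence, uniqueness and linear bounds for the support function φ of the learned weight distribution: let K : (−∞,0) → ℝ be measurable with K(w) < 0 for all w < 0 and K_m ≤ |K(w)| ≤ K_M for almost every w < 0, where 0 < K_m ≤ K_M. Then for every N ≥ 0 there exists a unique φ(N) ≥ 0 such that N² = ∫_{−φ(N)}^{0} (w/K(w)) dw, and this φ(N) satisfies √(2 K_m) · N ≤ φ(N) ≤ √(2 K_M) · N. -/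
open MeasureTheory Real Set Filter

/-- Existence, uniqueness and linear bounds for the support function `φ` of the
learned weight distribution: for every `N ≥ 0` there is a unique `φ(N) ≥ 0` with
`N² = ∫_{−φ(N)}^0 w/K(w) dw`, and `√(2 K_m) N ≤ φ(N) ≤ √(2 K_M) N`. -/
theorem stmt16 (K : ℝ → ℝ) (hKmeas : Measurable K)
    (hKneg : ∀ w : ℝ, w < 0 → K w < 0)
    (Km KM : ℝ) (hKm : 0 < Km) (hKmM : Km ≤ KM)
    (hKbd : ∀ᵐ w : ℝ, w < 0 → Km ≤ |K w| ∧ |K w| ≤ KM) :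
    ∀ N : ℝ, 0 ≤ N →
      ∃ φN : ℝ,
        (0 ≤ φN ∧ N ^ 2 = ∫ w in Set.Ioc (-φN) (0 : ℝ), w / K w) ∧
        (∀ ψ : ℝ, 0 ≤ ψ → N ^ 2 = (∫ w in Set.Ioc (-ψ) (0 : ℝ), w / K w) → ψ = φN) ∧
        Real.sqrt (2 * Km) * N ≤ φN ∧ φN ≤ Real.sqrt (2 * KM) * N := by
  intro N hN
  have hKM : 0 < KM := hKm.trans_le hKmM
  set f : ℝ → ℝ := fun w => w / K w with hf
  have hmeas : Measurable f := measurable_id.div hKmeas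
  -- integrability on Ioc a 0
  have hIntOn : ∀ a : ℝ, a ≤ 0 → IntegrableOn f (Set.Ioc a 0) := by
    intro a ha
    apply Measure.integrableOn_of_bounded (M := -a / Km) measure_Ioc_lt_top.ne
      hmeas.aestronglyMeasurable
    filter_upwards [ae_restrict_of_ae hKbd, ae_restrict_mem measurableSet_Ioc]
      with w hw hwmem
    obtain ⟨haw, hw0⟩ := hwmem
    rcases eq_or_lt_of_le hw0 with h0 | hlt
    · simp only [hf, h0, zero_div, norm_zero]
      apply div_nonneg (by linarith) hKm.le
    · obtain ⟨h1, h2⟩ := hw hlt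
      have hwa : |w| ≤ -a := by rw [abs_of_neg hlt]; linarith
      have : ‖f w‖ = |w| / |K w| := by
        simp [hf, abs_div, Real.norm_eq_abs]
      rw [this]
      exact div_le_div₀ (by linarith) hwa hKm h1
  have hII : ∀ a b : ℝ, a ≤ b → b ≤ 0 → IntervalIntegrable f volume a b := by
    intro a b hab hb
    rw [intervalIntegrable_iff_integrableOn_Ioc_of_le hab]
    exact (hIntOn a (hab.trans hb)).mono_set (Set.Ioc_subset_Ioc_right hb)
  -- explicit comparison integrals
  have hcomp : ∀ c : ℝ, c ≠ 0 → ∀ a b : ℝ,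
      (∫ w in a..b, -w / c) = (a ^ 2 - b ^ 2) / (2 * c) := by
    intro c hc a b
    have h : (fun w : ℝ => -w / c) = fun w => (-(1 : ℝ) / c) * w := by
      funext w; ring
    rw [h, intervalIntegral.integral_const_mul, integral_id]
    ring
  -- key two-sided bounds
  have hbound : ∀ a b : ℝ, a ≤ b → b ≤ 0 →
      (a ^ 2 - b ^ 2) / (2 * KM) ≤ (∫ w in a..b, f w) ∧
      (∫ w in a..b, f w) ≤ (a ^ 2 - b ^ 2) / (2 * Km) := by
    intro a b hab hb
    have hIc : ∀ c : ℝ, 0 < c → IntervalIntegrable (fun w => -w / c) volume a b :=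
      fun c hc => (Continuous.intervalIntegrable (by continuity) a b)
    have hlo : ∀ᵐ w ∂(volume.restrict (Set.Icc a b)), (-w / KM) ≤ f w := by
      filter_upwards [ae_restrict_of_ae hKbd, ae_restrict_mem measurableSet_Icc]
        with w hw hwmem
      rcases eq_or_lt_of_le (hwmem.2.trans hb) with h0 | hlt
      · simp [hf, h0]
      · obtain ⟨h1, h2⟩ := hw hlt
        have hKneg' := hKneg w hlt
        rw [abs_of_neg hKneg'] at h1 h2
        have : f w = (-w) / (-K w) := by rw [hf]; simp [neg_div_neg_eq]
        rw [this]
        gcongr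
        · linarith
        · linarith
    have hhi : ∀ᵐ w ∂(volume.restrict (Set.Icc a b)), f w ≤ (-w / Km) := by
      filter_upwards [ae_restrict_of_ae hKbd, ae_restrict_mem measurableSet_Icc]
        with w hw hwmem
      rcases eq_or_lt_of_le (hwmem.2.trans hb) with h0 | hlt
      · simp [hf, h0]
      · obtain ⟨h1, h2⟩ := hw hlt
        have hKneg' := hKneg w hlt
        rw [abs_of_neg hKneg'] at h1 h2
        have : f w = (-w) / (-K w) := by rw [hf]; simp [neg_div_neg_eq]
        rw [this]
        gcongr
        · linarith
    constructor
    · rw [← hcomp KM hKM.ne' a b]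
      exact intervalIntegral.integral_mono_ae_restrict hab (hIc KM hKM)
        (hII a b hab hb) hlo
    · rw [← hcomp Km hKm.ne' a b]
      exact intervalIntegral.integral_mono_ae_restrict hab (hII a b hab hb)
        (hIc Km hKm) hhi
  -- the function g
  set g : ℝ → ℝ := fun ψ => ∫ w in (-ψ)..0, f w with hg
  have hgdiff : ∀ x y : ℝ, 0 ≤ y → y ≤ x → g x - g y = ∫ w in (-x)..(-y), f w := by
    intro x y hy hxy
    have h1 : IntervalIntegrable f volume (-x) (-y) :=
      hII _ _ (by linarith) (by linarith)
    have h2 : IntervalIntegrable f volume (-y) 0 := hII _ _ (by linarith) le_rfl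
    have := intervalIntegral.integral_add_adjacent_intervals h1 h2
    simp only [hg]
    linarith [this]
  have hgbd : ∀ x y : ℝ, 0 ≤ y → y ≤ x →
      (x ^ 2 - y ^ 2) / (2 * KM) ≤ g x - g y ∧
      g x - g y ≤ (x ^ 2 - y ^ 2) / (2 * Km) := by
    intro x y hy hxy
    rw [hgdiff x y hy hxy]
    have := hbound (-x) (-y) (by linarith) (by linarith)
    simpa using this
  have hg0 : g 0 = 0 := by simp [hg]
  have hgself : ∀ x : ℝ, 0 ≤ x →
      x ^ 2 / (2 * KM) ≤ g x ∧ g x ≤ x ^ 2 / (2 * Km) := by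
    intro x hx
    have := hgbd x 0 le_rfl hx
    rw [hg0] at this
    simpa using this
  -- Lipschitz continuity on [0, T]
  set T : ℝ := Real.sqrt (2 * KM) * N with hT
  have hT0 : 0 ≤ T := mul_nonneg (Real.sqrt_nonneg _) hN
  have hkey : ∀ x y : ℝ, x ∈ Set.Icc 0 T → y ∈ Set.Icc 0 T → y ≤ x →
      dist (g x) (g y) ≤ (T / Km) * dist x y := by
    intro x y hx hy hxy
    obtain ⟨h1, h2⟩ := hgbd x y hy.1 hxy
    have hnn : 0 ≤ g x - g y := by
      have : 0 ≤ (x ^ 2 - y ^ 2) / (2 * KM) := by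
        apply div_nonneg _ (by linarith)
        nlinarith [hy.1, hxy]
      linarith
    rw [Real.dist_eq, Real.dist_eq, abs_of_nonneg hnn, abs_of_nonneg (by linarith : (0:ℝ) ≤ x - y)]
    have e1 : T / Km * (x - y) = (2 * T * (x - y)) / (2 * Km) := by
      field_simp
    have hnum : x ^ 2 - y ^ 2 ≤ 2 * T * (x - y) := by
      nlinarith [mul_nonneg (by linarith [hx.2, hy.2] : (0:ℝ) ≤ 2 * T - (x + y))
        (by linarith : (0:ℝ) ≤ x - y)]
    have h3 : (x ^ 2 - y ^ 2) / (2 * Km) ≤ (T / Km) * (x - y) := by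
      rw [e1]
      gcongr
    linarith
  have hcont : ContinuousOn g (Set.Icc 0 T) := by
    have hlip : LipschitzOnWith (Real.toNNReal (T / Km)) g (Set.Icc 0 T) := by
      rw [lipschitzOnWith_iff_dist_le_mul]
      intro x hx y hy
      rw [Real.coe_toNNReal _ (div_nonneg hT0 hKm.le)]
      rcases le_total y x with h | h
      · exact hkey x y hx hy h
      · rw [dist_comm (g x), dist_comm x]
        exact hkey y x hy hx h
    exact hlip.continuousOn
  -- IVT
  have hmemIcc : N ^ 2 ∈ Set.Icc (g 0) (g T) := by
    constructor
    · rw [hg0]; positivity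
    · have := (hgself T hT0).1
      have hTsq : T ^ 2 = 2 * KM * N ^ 2 := by
        rw [hT, mul_pow, Real.sq_sqrt (by linarith : (0:ℝ) ≤ 2 * KM)]
      rw [hTsq] at this
      calc N ^ 2 = 2 * KM * N ^ 2 / (2 * KM) := by field_simp
        _ ≤ g T := this
  obtain ⟨φ, hφmem, hφeq⟩ := intermediate_value_Icc hT0 hcont hmemIcc
  -- conversion from interval integral to set integral
  have hconv : ∀ ψ : ℝ, 0 ≤ ψ →
      (∫ w in Set.Ioc (-ψ) (0 : ℝ), f w) = g ψ := by
    intro ψ hψ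
    exact (intervalIntegral.integral_of_le (by linarith : (-ψ:ℝ) ≤ 0)).symm
  refine ⟨φ, ⟨hφmem.1, ?_⟩, ?_, ?_, ?_⟩
  · rw [hconv φ hφmem.1, hφeq]
  · -- uniqueness
    intro ψ hψ hψeq
    rw [hconv ψ hψ] at hψeq
    by_contra hne
    rcases lt_or_gt_of_ne hne with h | h
    · have := (hgbd φ ψ hψ h.le).1
      have hpos : 0 < (φ ^ 2 - ψ ^ 2) / (2 * KM) := by
        apply div_pos _ (by linarith)
        nlinarith
      rw [hφeq, ← hψeq] at this
      linarith
    · have := (hgbd ψ φ hφmem.1 h.le).1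
      have hpos : 0 < (ψ ^ 2 - φ ^ 2) / (2 * KM) := by
        apply div_pos _ (by linarith)
        nlinarith [hφmem.1]
      rw [hφeq, ← hψeq] at this
      linarith
  · -- lower bound
    have h2 := (hgself φ hφmem.1).2
    rw [hφeq] at h2
    have hineq : 2 * Km * N ^ 2 ≤ φ ^ 2 := by
      rw [le_div_iff₀ (by linarith : (0:ℝ) < 2 * Km)] at h2
      linarith
    calc Real.sqrt (2 * Km) * N = Real.sqrt (2 * Km * N ^ 2) := by
          rw [Real.sqrt_mul (by linarith : (0:ℝ) ≤ 2 * Km), Real.sqrt_sq hN]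
      _ ≤ Real.sqrt (φ ^ 2) := Real.sqrt_le_sqrt hineq
      _ = φ := Real.sqrt_sq hφmem.1
  · exact hφmem.2
end

section
/- Differentiability of the support function φ: let K : (−∞,0) → ℝ be continuous with K(w) < 0 for all w < 0 and K_m ≤ |K(w)| ≤ K_M for all w < 0, where 0 < K_m ≤ K_M, and for N ≥ 0 let φ(N) ≥ 0 be the unique number with N² = ∫_{−φ(N)}^{0} (w/K(w)) dw. Then φ is differentiable on (0,∞) with φ'(N) = −2 N K(−φ(N)) / φ(N), and there exist constants C₁, C₂ > 0 (depending only on K_m and K_M) such that C₁ ≤ φ'(N) ≤ C₂ for all N > 0. -/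
open MeasureTheory Real Set Filter

open Topology

set_option maxHeartbeats 1600000 in
/-- Differentiability of the support function `φ` of the learned weight
distribution: `φ'(N) = −2 N K(−φ(N)) / φ(N)` and `C₁ ≤ φ' ≤ C₂` on `(0,∞)`,
with constants depending only on `K_m` and `K_M`. -/
theorem stmt17 (K : ℝ → ℝ) (hKcont : ContinuousOn K (Set.Iio 0))
    (hKneg : ∀ w : ℝ, w < 0 → K w < 0)
    (Km KM : ℝ) (hKm : 0 < Km) (hKmM : Km ≤ KM)
    (hKbd : ∀ w : ℝ, w < 0 → Km ≤ |K w| ∧ |K w| ≤ KM)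
    (φ : ℝ → ℝ)
    (hφ : ∀ N : ℝ, 0 ≤ N →
      0 ≤ φ N ∧ N ^ 2 = ∫ w in Set.Ioc (-φ N) (0 : ℝ), w / K w) :
    ∃ C₁ C₂ : ℝ, 0 < C₁ ∧ 0 < C₂ ∧
      ∀ N : ℝ, 0 < N →
        HasDerivAt φ (-2 * N * K (-φ N) / φ N) N ∧
        C₁ ≤ -2 * N * K (-φ N) / φ N ∧ -2 * N * K (-φ N) / φ N ≤ C₂ := by
  have hKM : 0 < KM := hKm.trans_le hKmM
  set f : ℝ → ℝ := fun w => w / K w with hfdef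
  have hK0 : ∀ w : ℝ, w < 0 → K w ≠ 0 := fun w hw => (hKneg w hw).ne
  have hfcont : ContinuousOn f (Set.Iio 0) :=
    (continuousOn_id).div hKcont (fun w hw => hK0 w hw)
  -- pointwise bounds on f on (-∞, 0]
  have hfbd : ∀ w : ℝ, w ≤ 0 → -w / KM ≤ f w ∧ f w ≤ -w / Km := by
    intro w hw
    rcases eq_or_lt_of_le hw with h | h
    · subst h; constructor <;> simp [hfdef]
    · have hKw := hKneg w h
      have habs : Km ≤ -K w ∧ -K w ≤ KM := by
        have := hKbd w h
        rwa [abs_of_neg hKw] at this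
      have hKpos : (0:ℝ) < -K w := by linarith
      have hfw : f w = -w / -K w := by
        simp only [hfdef, neg_div_neg_eq]
      constructor
      · rw [hfw]
        exact div_le_div_of_nonneg_left (by linarith) hKpos habs.2
      · rw [hfw]
        exact div_le_div_of_nonneg_left (by linarith) hKm habs.1
  -- integrability
  have hint : ∀ a : ℝ, a ≤ 0 → IntegrableOn f (Set.Ioc a 0) := by
    intro a ha
    have h1 : IntegrableOn f (Set.Ioo a 0) := by
      refine ⟨(hfcont.mono Set.Ioo_subset_Iio_self).aestronglyMeasurable measurableSet_Ioo,
        HasFiniteIntegral.restrict_of_bounded (C := -a / Km) measure_Ioo_lt_top ?_⟩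
      filter_upwards [ae_restrict_mem measurableSet_Ioo] with w hw
      have hb := hfbd w hw.2.le
      rw [Real.norm_eq_abs, abs_le]
      constructor
      · have h1 : (0:ℝ) ≤ -w / KM := div_nonneg (by linarith [hw.2]) hKM.le
        have h2 : -(-a/Km) ≤ 0 := neg_nonpos_of_nonneg (div_nonneg (by linarith) hKm.le)
        linarith [hb.1]
      · have h3 : -w / Km ≤ -a / Km := by
          gcongr
          linarith [hw.1]
        linarith [hb.2]
    exact h1.congr_set_ae Ioo_ae_eq_Ioc.symm
  have hii : ∀ a b : ℝ, a ≤ b → b ≤ 0 → IntervalIntegrable f volume a b := by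
    intro a b hab hb
    have h0 : IntervalIntegrable f volume a 0 :=
      (intervalIntegrable_iff_integrableOn_Ioc_of_le (hab.trans hb)).mpr (hint a (hab.trans hb))
    exact h0.mono_set (by rw [Set.uIcc_of_le hab, Set.uIcc_of_le (hab.trans hb)]
                          exact Set.Icc_subset_Icc le_rfl hb)
  -- the function G
  set G : ℝ → ℝ := fun x => ∫ w in (-x)..(0:ℝ), f w with hGdef
  have hGeq : ∀ x : ℝ, 0 ≤ x → G x = ∫ w in Set.Ioc (-x) (0:ℝ), f w := by
    intro x hx
    rw [hGdef]
    exact intervalIntegral.integral_of_le (by linarith)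
  have hφG : ∀ N : ℝ, 0 ≤ N → G (φ N) = N ^ 2 := by
    intro N hN
    rw [hGeq _ (hφ N hN).1]
    exact ((hφ N hN).2).symm
  -- difference bounds
  have hGdiff : ∀ a b : ℝ, 0 ≤ b → b ≤ a →
      (a^2 - b^2) / (2*KM) ≤ G a - G b ∧ G a - G b ≤ (a^2 - b^2) / (2*Km) := by
    intro a b hb hba
    have hadd : G a - G b = ∫ w in (-a)..(-b), f w := by
      have h := intervalIntegral.integral_add_adjacent_intervals
        (hii (-a) (-b) (by linarith) (by linarith)) (hii (-b) 0 (by linarith) le_rfl)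
      rw [hGdef]
      simp only []
      linarith [h]
    have hid : ∀ c : ℝ, c ≠ 0 → ∫ w in (-a)..(-b), -w / c = (a^2 - b^2) / (2*c) := by
      intro c hc
      rw [show (fun w : ℝ => -w / c) = (fun w : ℝ => -(w / c)) from by funext w; ring]
      rw [intervalIntegral.integral_neg, intervalIntegral.integral_div, integral_id]
      field_simp <;> ring
    have hintlo : IntervalIntegrable (fun w : ℝ => -w / KM) volume (-a) (-b) :=
      (continuous_neg.div_const KM).intervalIntegrable _ _
    have hinthi : IntervalIntegrable (fun w : ℝ => -w / Km) volume (-a) (-b) :=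
      (continuous_neg.div_const Km).intervalIntegrable _ _
    have hfint : IntervalIntegrable f volume (-a) (-b) := hii _ _ (by linarith) (by linarith)
    constructor
    · rw [hadd, ← hid KM hKM.ne']
      apply intervalIntegral.integral_mono_on (by linarith) hintlo hfint
      intro w hw
      exact (hfbd w (hw.2.trans (by linarith))).1
    · rw [hadd, ← hid Km hKm.ne']
      apply intervalIntegral.integral_mono_on (by linarith) hfint hinthi
      intro w hw
      exact (hfbd w (hw.2.trans (by linarith))).2
  have hG0 : G 0 = 0 := by simp [hGdef]
  -- bounds on φ
  have hφbd : ∀ N : ℝ, 0 ≤ N →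
      Real.sqrt (2*Km) * N ≤ φ N ∧ φ N ≤ Real.sqrt (2*KM) * N := by
    intro N hN
    have hφN := (hφ N hN).1
    have h := hGdiff (φ N) 0 le_rfl hφN
    rw [hG0, hφG N hN] at h
    simp only [sub_zero] at h
    have h1 : 2*Km * N^2 ≤ (φ N)^2 := by
      have := (le_div_iff₀ (by positivity)).mp h.2
      nlinarith [this]
    have h2 : (φ N)^2 ≤ 2*KM * N^2 := by
      have := (div_le_iff₀ (by positivity)).mp h.1
      nlinarith [this]
    constructor
    · have h3 : Real.sqrt (2*Km*N^2) ≤ Real.sqrt ((φ N)^2) := Real.sqrt_le_sqrt h1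
      rwa [Real.sqrt_mul (by positivity) (N^2), Real.sqrt_sq hN, Real.sqrt_sq hφN] at h3
    · have h3 : Real.sqrt ((φ N)^2) ≤ Real.sqrt (2*KM*N^2) := Real.sqrt_le_sqrt h2
      rwa [Real.sqrt_mul (by positivity) (N^2), Real.sqrt_sq hN, Real.sqrt_sq hφN] at h3
  -- derivative of G
  have hGderiv : ∀ x : ℝ, 0 < x → HasDerivAt G (f (-x)) x := by
    intro x hx
    have hmem : -x ∈ Set.Iio (0:ℝ) := by simpa using hx
    have hca : ContinuousAt f (-x) := hfcont.continuousAt (Iio_mem_nhds (by linarith))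
    have hmeas : StronglyMeasurableAtFilter f (𝓝 (-x)) volume :=
      hfcont.stronglyMeasurableAtFilter isOpen_Iio _ hmem
    have h1 : HasDerivAt (fun u => ∫ t in (0:ℝ)..u, f t) (f (-x)) (-x) :=
      intervalIntegral.integral_hasDerivAt_right
        ((hii (-x) 0 (by linarith) le_rfl).symm) hmeas hca
    have h2 : HasDerivAt (fun y : ℝ => ∫ t in (0:ℝ)..(-y), f t) (f (-x) * (-1)) x :=
      h1.comp x (hasDerivAt_neg x)
    have h3 : HasDerivAt (fun y : ℝ => -∫ t in (0:ℝ)..(-y), f t) (f (-x)) x := by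
      have h4 := h2.neg
      simpa [Pi.neg_def] using h4
    apply h3.congr_of_eventuallyEq
    filter_upwards with y
    rw [hGdef]
    simp only []
    rw [intervalIntegral.integral_symm]
  -- the inverse function g
  set g : ℝ → ℝ := fun y => φ (Real.sqrt y) with hgdef
  have hGg : ∀ y : ℝ, 0 < y → G (g y) = y := by
    intro y hy
    have h := hφG (Real.sqrt y) (Real.sqrt_nonneg y)
    rwa [Real.sq_sqrt hy.le] at h
  refine ⟨2*Km / Real.sqrt (2*KM), 2*KM / Real.sqrt (2*Km), by positivity, by positivity, ?_⟩
  intro N hN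
  have hφN0 := (hφ N hN.le).1
  have hφbdN := hφbd N hN.le
  have hφNpos : 0 < φ N := lt_of_lt_of_le (by positivity) hφbdN.1
  have hKφ : K (-φ N) < 0 := hKneg _ (by linarith)
  have hKφbd := hKbd (-φ N) (by linarith)
  rw [abs_of_neg hKφ] at hKφbd
  -- continuity of g at N^2
  have hgN : g (N^2) = φ N := by rw [hgdef]; simp [Real.sqrt_sq hN.le]
  have hgcont : ContinuousAt g (N^2) := by
    rw [ContinuousAt, hgN]
    rw [tendsto_iff_dist_tendsto_zero]
    apply squeeze_zero' (Filter.Eventually.of_forall fun y => dist_nonneg)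
      (g := fun y => 2*KM * |y - N^2| / φ N)
    · filter_upwards [eventually_gt_nhds (show (0:ℝ) < N^2 by positivity)] with y hy
      have hgy0 : 0 ≤ g y := (hφ (Real.sqrt y) (Real.sqrt_nonneg y)).1
      have key : |(g y)^2 - (φ N)^2| ≤ 2*KM * |y - N^2| := by
        rcases le_total (g y) (φ N) with h | h
        · have hd := (hGdiff (φ N) (g y) hgy0 h).1
          rw [hGg y hy, hφG N hN.le] at hd
          have habs1 : |(g y)^2 - (φ N)^2| = (φ N)^2 - (g y)^2 := by
            rw [abs_sub_comm, abs_of_nonneg]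
            nlinarith [h, hgy0]
          have habs2 : N^2 - y ≤ |y - N^2| := by
            rw [abs_sub_comm]; exact le_abs_self _
          rw [habs1]
          have hd2 := (div_le_iff₀ (by positivity : (0:ℝ) < 2*KM)).mp hd
          nlinarith [hd2, habs2]
        · have hd := (hGdiff (g y) (φ N) hφN0 h).1
          rw [hGg y hy, hφG N hN.le] at hd
          have habs1 : |(g y)^2 - (φ N)^2| = (g y)^2 - (φ N)^2 := by
            rw [abs_of_nonneg]
            nlinarith [h, hφN0]
          have habs2 : y - N^2 ≤ |y - N^2| := le_abs_self _
          rw [habs1]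
          have hd2 := (div_le_iff₀ (by positivity : (0:ℝ) < 2*KM)).mp hd
          nlinarith [hd2, habs2]
      rw [Real.dist_eq, le_div_iff₀ hφNpos]
      calc |g y - φ N| * φ N ≤ |g y - φ N| * (g y + φ N) := by
            apply mul_le_mul_of_nonneg_left (by linarith) (abs_nonneg _)
      _ = |(g y)^2 - (φ N)^2| := by
            rw [← abs_of_nonneg (show (0:ℝ) ≤ g y + φ N by linarith), ← abs_mul]
            congr 1
            ring
      _ ≤ 2*KM * |y - N^2| := key
    · have h0 : Tendsto (fun y : ℝ => |y - N^2|) (𝓝 (N^2)) (𝓝 0) := by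
        have h1 : Tendsto (fun y : ℝ => y - N^2) (𝓝 (N^2)) (𝓝 0) := by
          have h2 := (continuous_id.sub (continuous_const (y := N^2))).tendsto (N^2)
          simpa [sub_self, Pi.sub_def] using h2
        simpa using h1.abs
      have h2 : Tendsto (fun y : ℝ => 2*KM * |y - N^2| / φ N) (𝓝 (N^2))
          (𝓝 (2*KM * 0 / φ N)) := (tendsto_const_nhds.mul h0).div_const _
      simpa using h2
  -- derivative of g at N^2
  have hfφ : f (-φ N) = -φ N / K (-φ N) := rfl
  have hfφpos : 0 < f (-φ N) := by
    rw [hfφ]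
    exact div_pos_of_neg_of_neg (by linarith) hKφ
  have hGd : HasDerivAt G (f (-φ N)) (g (N^2)) := by
    rw [hgN]; exact hGderiv (φ N) hφNpos
  have hgd : HasDerivAt g (f (-φ N))⁻¹ (N^2) := by
    apply HasDerivAt.of_local_left_inverse hgcont hGd hfφpos.ne'
    filter_upwards [eventually_gt_nhds (show (0:ℝ) < N^2 by positivity)] with y hy
    exact hGg y hy
  -- derivative of φ at N
  have hsq : HasDerivAt (fun M : ℝ => M^2) (2*N) N := by
    simpa using (hasDerivAt_pow 2 N)
  have hcomp0 : HasDerivAt (g ∘ fun M : ℝ => M^2) ((f (-φ N))⁻¹ * (2*N)) N :=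
    HasDerivAt.comp N (by simpa using hgd) hsq
  have hcomp : HasDerivAt (fun M : ℝ => g (M^2)) ((f (-φ N))⁻¹ * (2*N)) N := hcomp0
  have hφd : HasDerivAt φ ((f (-φ N))⁻¹ * (2*N)) N := by
    apply hcomp.congr_of_eventuallyEq
    filter_upwards [eventually_gt_nhds hN] with M hM
    rw [hgdef]
    simp [Real.sqrt_sq hM.le]
  have hval : (f (-φ N))⁻¹ * (2*N) = -2 * N * K (-φ N) / φ N := by
    rw [hfφ, inv_div]
    field_simp [hφNpos.ne']
  rw [hval] at hφd
  have hrepr : -2 * N * K (-φ N) / φ N = 2*N*(-K (-φ N)) / φ N := by ring_nf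
  refine ⟨hφd, ?_, ?_⟩
  · rw [hrepr]
    have hc1 : 2*Km / Real.sqrt (2*KM) = 2*N*Km / (Real.sqrt (2*KM) * N) := by
      rw [div_eq_div_iff (by positivity) (by positivity)]
      ring
    rw [hc1]
    exact div_le_div₀ (by nlinarith [hKφbd.1]) (by nlinarith [hKφbd.1]) hφNpos hφbdN.2
  · rw [hrepr]
    have hc2 : 2*KM / Real.sqrt (2*Km) = 2*N*KM / (Real.sqrt (2*Km) * N) := by
      rw [div_eq_div_iff (by positivity) (by positivity)]
      ring
    rw [hc2]
    exact div_le_div₀ (by positivity) (by nlinarith [hKφbd.2]) (by positivity) hφbdN.1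
end
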